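/- arXiv:2407.00970 — 5 statements merged into one kernel-verified Lean document; each statement's English description precedes it below -/
import Mathlib

section
/- Let f : ℝ → ℂ be a Schwartz function whose Fourier transform F f(ξ) := ∫_ℝ f(x) e^{−i ξ x} dx vanishes for all ξ with |ξ| ≥ π. Then ∫_ℝ f(x) · sgn(cos(πx)) dx = 0. -/
open MeasureTheory Real Filter Asymptotics
open scoped FourierTransform

lemma measurable_realSign : Measurable Real.sign := by
  have : Real.sign = fun r : ℝ => if r < 0 then (-1 : ℝ) else if 0 < r then 1 else 0 := rfl
  rw [this]
  exact Measurable.ite measurableSet_Iio measurable_const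
    (Measurable.ite measurableSet_Ioi measurable_const measurable_const)

lemma abs_realSign_le_one (r : ℝ) : |Real.sign r| ≤ 1 := by
  rcases Real.sign_apply_eq r with h | h | h <;> rw [h] <;> norm_num

lemma intervalIntegrable_sign_cos (a b : ℝ) :
    IntervalIntegrable (fun u => Real.sign (Real.cos (2 * Real.pi * u))) volume a b := by
  rw [intervalIntegrable_iff]
  apply Measure.integrableOn_of_bounded (M := 1)
  · exact (measure_Ioc_lt_top).ne
  · exact (measurable_realSign.comp
      (Real.continuous_cos.comp (continuous_const.mul continuous_id)).measurable).aestronglyMeasurable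
  · filter_upwards with u
    rw [Real.norm_eq_abs]
    exact abs_realSign_le_one _

lemma integral_sign_cos_two_pi :
    ∫ u in (0:ℝ)..1, Real.sign (Real.cos (2 * Real.pi * u)) = 0 := by
  have pi_pos := Real.pi_pos
  rw [← intervalIntegral.integral_add_adjacent_intervals
      (intervalIntegrable_sign_cos 0 (1/4)) (intervalIntegrable_sign_cos (1/4) 1),
    ← intervalIntegral.integral_add_adjacent_intervals
      (intervalIntegrable_sign_cos (1/4) (3/4)) (intervalIntegrable_sign_cos (3/4) 1)]
  have h1 : ∫ u in (0:ℝ)..(1/4), Real.sign (Real.cos (2 * Real.pi * u)) = 1/4 := by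
    rw [intervalIntegral.integral_of_le (by norm_num), integral_Ioc_eq_integral_Ioo,
      setIntegral_congr_fun measurableSet_Ioo (g := fun _ => (1:ℝ)) ?_]
    · simp [Real.volume_Ioo]
    · intro u hu
      obtain ⟨hu1, hu2⟩ := hu
      refine Real.sign_of_pos (Real.cos_pos_of_mem_Ioo ⟨by nlinarith, by nlinarith⟩)
  have h2 : ∫ u in (1/4:ℝ)..(3/4), Real.sign (Real.cos (2 * Real.pi * u)) = -(1/2) := by
    rw [intervalIntegral.integral_of_le (by norm_num), integral_Ioc_eq_integral_Ioo,
      setIntegral_congr_fun measurableSet_Ioo (g := fun _ => (-1:ℝ)) ?_]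
    · simp [Real.volume_Ioo]; norm_num
    · intro u hu
      obtain ⟨hu1, hu2⟩ := hu
      refine Real.sign_of_neg (Real.cos_neg_of_pi_div_two_lt_of_lt (by nlinarith) (by nlinarith))
  have h3 : ∫ u in (3/4:ℝ)..1, Real.sign (Real.cos (2 * Real.pi * u)) = 1/4 := by
    rw [intervalIntegral.integral_of_le (by norm_num), integral_Ioc_eq_integral_Ioo,
      setIntegral_congr_fun measurableSet_Ioo (g := fun _ => (1:ℝ)) ?_]
    · simp [Real.volume_Ioo]; norm_num
    · intro u hu
      obtain ⟨hu1, hu2⟩ := hu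
      show Real.sign (Real.cos (2 * Real.pi * u)) = 1
      rw [show Real.cos (2 * Real.pi * u) = Real.cos (2 * Real.pi * u - 2 * Real.pi) from
        (Real.cos_sub_two_pi _).symm]
      refine Real.sign_of_pos (Real.cos_pos_of_mem_Ioo ⟨by nlinarith, by nlinarith⟩)
  rw [h1, h2, h3]; ring

/-- If `f` is a Schwartz function whose Fourier transform
`ξ ↦ ∫ f(x) e^{−iξx} dx` vanishes for `|ξ| ≥ π`, then
`∫ f(x) · sgn(cos(πx)) dx = 0`. -/
theorem integral_against_sgn_cos_eq_zero
    (f : SchwartzMap ℝ ℂ)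
    (hf : ∀ ξ : ℝ, Real.pi ≤ |ξ| →
      (∫ x : ℝ, f x * Complex.exp (-(Complex.I * (ξ : ℂ) * (x : ℂ)))) = 0) :
    (∫ x : ℝ, f x * ((Real.sign (Real.cos (Real.pi * x)) : ℝ) : ℂ)) = 0 := by
  have pi_pos := Real.pi_pos
  set f₂ : ℝ → ℂ := fun x => f (2 * x) with hf₂def
  have hcont : Continuous f₂ := f.continuous.comp (continuous_const.mul continuous_id)
  set g : ℝ → ℂ := fun u => ((Real.sign (Real.cos (2 * Real.pi * u)) : ℝ) : ℂ) with hgdef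
  -- the Fourier transform of f₂ vanishes for |ξ| ≥ 1
  have hF : ∀ ξ : ℝ, 1 ≤ |ξ| → 𝓕 f₂ ξ = 0 := by
    intro ξ hξ
    rw [Real.fourier_real_eq_integral_exp_smul]
    have heq : (fun x : ℝ => Complex.exp (↑(-2 * Real.pi * x * ξ) * Complex.I) • f₂ x)
        = fun x => (fun u : ℝ => f u * Complex.exp (-(Complex.I * ↑(Real.pi * ξ) * ↑u))) (2 * x) := by
      ext x
      simp only [smul_eq_mul, hf₂def]
      rw [mul_comm]
      congr 1
      push_cast
      ring_nf
    rw [heq]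
    rw [show (∫ x : ℝ, (fun u : ℝ => f u * Complex.exp (-(Complex.I * ↑(Real.pi * ξ) * ↑u))) (2 * x))
        = |(2:ℝ)⁻¹| • ∫ u : ℝ, f u * Complex.exp (-(Complex.I * ↑(Real.pi * ξ) * ↑u)) from
      Measure.integral_comp_mul_left
        (fun u : ℝ => f u * Complex.exp (-(Complex.I * ↑(Real.pi * ξ) * ↑u))) 2]
    rw [hf (Real.pi * ξ) ?_, smul_zero]
    rw [abs_mul, abs_of_pos pi_pos]
    nlinarith [abs_nonneg ξ]
  -- decay of f₂
  have hO : f₂ =O[cocompact ℝ] (fun x : ℝ => |x| ^ (-2:ℝ)) := by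
    have ht : Tendsto (fun x : ℝ => 2 * x) (cocompact ℝ) (cocompact ℝ) := by
      have h := (Homeomorph.mulLeft₀ (2:ℝ) two_ne_zero).map_cocompact
      rw [Homeomorph.coe_mulLeft₀] at h
      exact h.le
    have h2 := (f.isBigO_cocompact_rpow (-2)).comp_tendsto ht
    have h3 : ((fun x : ℝ => ‖x‖ ^ (-2:ℝ)) ∘ (fun x : ℝ => 2 * x))
        =O[cocompact ℝ] (fun x : ℝ => |x| ^ (-2:ℝ)) := by
      have : ((fun x : ℝ => ‖x‖ ^ (-2:ℝ)) ∘ (fun x : ℝ => 2 * x))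
          = fun x : ℝ => (2:ℝ) ^ (-2:ℝ) * |x| ^ (-2:ℝ) := by
        ext x
        simp only [Function.comp_apply, Real.norm_eq_abs, abs_mul, abs_two]
        rw [Real.mul_rpow (by norm_num) (abs_nonneg _)]
      rw [this]
      exact isBigO_const_mul_self _ _ _
    exact h2.trans h3
  have hFO : (𝓕 f₂) =O[cocompact ℝ] (fun x : ℝ => |x| ^ (-2:ℝ)) := by
    have hev : (𝓕 f₂) =ᶠ[cocompact ℝ] (fun _ => (0:ℂ)) := by
      refine (Filter.hasBasis_cocompact.eventually_iff).2
        ⟨Set.Icc (-1) 1, isCompact_Icc, fun x hx => hF x ?_⟩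
      rw [le_abs]
      by_contra hc
      push_neg at hc
      exact hx (Set.mem_Icc.2 ⟨by linarith [hc.2], by linarith [hc.1]⟩)
    exact (Asymptotics.isBigO_zero _ _).congr' hev.symm Filter.EventuallyEq.rfl
  -- Poisson summation: the periodization of f₂ is constant
  have hP : ∀ x : ℝ, ∑' n : ℤ, f₂ (x + n) = 𝓕 f₂ 0 := by
    intro x
    rw [Real.tsum_eq_tsum_fourier_of_rpow_decay hcont one_lt_two hO hFO x]
    rw [tsum_eq_single 0 ?_]
    · simp
    · intro n hn
      rw [hF n ?_, zero_mul]
      rw [show ((n:ℝ)) = ((n:ℤ):ℝ) from rfl, ← Int.cast_abs]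
      exact_mod_cast Int.one_le_abs (by exact_mod_cast hn)
  -- basic facts about g
  have hgmeas : Measurable g := by
    apply Complex.measurable_ofReal.comp
    exact measurable_realSign.comp
      (Real.continuous_cos.comp (continuous_const.mul continuous_id)).measurable
  have hgbdd : ∀ u, ‖g u‖ ≤ 1 := by
    intro u
    rw [hgdef]
    simp only [Complex.norm_real, Real.norm_eq_abs]
    exact abs_realSign_le_one _
  have hgper : ∀ (u : ℝ) (n : ℤ), g (u + n) = g u := by
    intro u n
    simp only [hgdef]
    norm_cast
    rw [show 2 * Real.pi * (u + n) = 2 * Real.pi * u + n * (2 * Real.pi) by ring,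
      Real.cos_add_int_mul_two_pi]
  -- the key computation
  have hintf₂ : Integrable f₂ := f.integrable.comp_mul_left' two_ne_zero
  have hF_int : Integrable (fun u => f₂ u * g u) := by
    have := hintf₂.bdd_mul hgmeas.aestronglyMeasurable (ae_of_all _ hgbdd)
    simpa [mul_comm] using this
  have key : (∫ u : ℝ, f₂ u * g u) = 0 := by
    have split := hF_int.hasSum_intervalIntegral_comp_add_int
    have keyeq : (∫ u : ℝ, f₂ u * g u)
        = ∑' n : ℤ, ∫ u in Set.Ioc (0:ℝ) 1, f₂ (u + n) * g u := by
      rw [← split.tsum_eq]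
      congr 1
      ext n
      rw [intervalIntegral.integral_of_le zero_le_one]
      congr 1
      ext u
      rw [hgper]
    rw [keyeq]
    -- swap sum and integral
    have hint_n : ∀ n : ℤ, IntegrableOn (fun u => f₂ (u + n) * g u) (Set.Ioc (0:ℝ) 1) := by
      intro n
      have h1 : IntegrableOn (fun u : ℝ => f₂ (u + n)) (Set.Ioc (0:ℝ) 1) :=
        (hcont.comp (continuous_add_right _)).integrableOn_Ioc
      have := h1.bdd_mul hgmeas.aestronglyMeasurable (ae_of_all _ hgbdd)
      simpa [mul_comm, IntegrableOn] using this
    set F₂ : C(ℝ, ℂ) := ⟨f₂, hcont⟩ with hF₂def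
    have hM : Summable fun n : ℤ =>
        ‖(F₂.comp (ContinuousMap.addRight (n:ℝ))).restrict
          (⟨Set.Icc 0 1, isCompact_Icc⟩ : TopologicalSpace.Compacts ℝ)‖ :=
      summable_of_isBigO (Real.summable_abs_int_rpow one_lt_two)
        ((isBigO_norm_restrict_cocompact F₂ two_pos hO _).comp_tendsto Int.tendsto_coe_cofinite)
    have hswap := MeasureTheory.integral_tsum_of_summable_integral_norm
      (μ := volume.restrict (Set.Ioc (0:ℝ) 1))
      (F := fun (n : ℤ) (u : ℝ) => f₂ (u + n) * g u) hint_n ?_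
    · rw [hswap]
      have hpt : ∀ u : ℝ, ∑' n : ℤ, f₂ (u + n) * g u = 𝓕 f₂ 0 * g u := by
        intro u
        rw [tsum_mul_right, hP u]
      simp_rw [hpt]
      have hg0 : (∫ u in Set.Ioc (0:ℝ) 1, g u) = 0 := by
        have hr : (∫ u in Set.Ioc (0:ℝ) 1, Real.sign (Real.cos (2 * Real.pi * u))) = 0 := by
          rw [← intervalIntegral.integral_of_le zero_le_one]
          exact integral_sign_cos_two_pi
        calc (∫ u in Set.Ioc (0:ℝ) 1, g u)
            = ((∫ u in Set.Ioc (0:ℝ) 1, Real.sign (Real.cos (2 * Real.pi * u)) : ℝ) : ℂ) :=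
              integral_ofReal (𝕜 := ℂ) (f := fun u => Real.sign (Real.cos (2 * Real.pi * u)))
          _ = 0 := by rw [hr, Complex.ofReal_zero]
      calc (∫ u in Set.Ioc (0:ℝ) 1, 𝓕 f₂ 0 * g u)
          = 𝓕 f₂ 0 * ∫ u in Set.Ioc (0:ℝ) 1, g u := integral_const_mul _ _
        _ = 0 := by rw [hg0, mul_zero]
    · -- summability of the integrals of norms
      apply Summable.of_nonneg_of_le
        (fun n => integral_nonneg fun u => norm_nonneg _) ?_ hM
      intro n
      have hb : ∀ u ∈ Set.Ioc (0:ℝ) 1, ‖f₂ (u + n) * g u‖ ≤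
          ‖(F₂.comp (ContinuousMap.addRight (n:ℝ))).restrict
            (⟨Set.Icc 0 1, isCompact_Icc⟩ : TopologicalSpace.Compacts ℝ)‖ := by
        intro u hu
        rw [norm_mul]
        calc ‖f₂ (u + n)‖ * ‖g u‖ ≤ ‖f₂ (u + n)‖ * 1 :=
              mul_le_mul_of_nonneg_left (hgbdd u) (norm_nonneg _)
          _ = ‖f₂ (u + n)‖ := mul_one _
          _ ≤ _ := by
              have := ContinuousMap.norm_coe_le_norm
                ((F₂.comp (ContinuousMap.addRight (n:ℝ))).restrict
                  (⟨Set.Icc 0 1, isCompact_Icc⟩ : TopologicalSpace.Compacts ℝ))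
                ⟨u, Set.Ioc_subset_Icc_self hu⟩
              simpa [hF₂def] using this
      calc (∫ u in Set.Ioc (0:ℝ) 1, ‖f₂ (u + n) * g u‖)
          ≤ ∫ _ in Set.Ioc (0:ℝ) 1, ‖(F₂.comp (ContinuousMap.addRight (n:ℝ))).restrict
              (⟨Set.Icc 0 1, isCompact_Icc⟩ : TopologicalSpace.Compacts ℝ)‖ := by
            apply setIntegral_mono_on ((hint_n n).norm) (integrableOn_const ?_)
              measurableSet_Ioc hb
            rw [Real.volume_Ioc]
            norm_num
        _ = _ := by
            rw [setIntegral_const]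
            rw [Real.volume_real_Ioc]
            norm_num
  -- conclude with the change of variables x = 2u
  have hcov : (∫ x : ℝ, f (2 * x) * ((Real.sign (Real.cos (Real.pi * (2 * x))) : ℝ) : ℂ))
      = |(2:ℝ)⁻¹| • ∫ x : ℝ, f x * ((Real.sign (Real.cos (Real.pi * x)) : ℝ) : ℂ) :=
    Measure.integral_comp_mul_left
      (fun x : ℝ => f x * ((Real.sign (Real.cos (Real.pi * x)) : ℝ) : ℂ)) 2
  have hlhs : (∫ x : ℝ, f (2 * x) * ((Real.sign (Real.cos (Real.pi * (2 * x))) : ℝ) : ℂ))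
      = ∫ u : ℝ, f₂ u * g u := by
    congr 1
    ext x
    rw [show Real.pi * (2 * x) = 2 * Real.pi * x by ring]
  rw [hlhs, key] at hcov
  have habs : |(2:ℝ)⁻¹| ≠ 0 := by norm_num
  rcases smul_eq_zero.1 hcov.symm with h | h
  · exact absurd h habs
  · exact h
end

section
/- Let r ≥ 2 and let a₁, …, a_r be pairwise distinct integers. Then ∑_{n∈ℤ} 1/( (n+a₁+1/2)(n+a₂+1/2)⋯(n+a_r+1/2) ) = 0, the sum converging absolutely. -/
open Filter Topology

lemma denom_ne (c n : ℤ) : ((n:ℝ) + (c:ℝ) + 1/2) ≠ 0 := by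
  intro h
  have h2 : ((2*(n+c)+1 : ℤ) : ℝ) = 0 := by push_cast; linarith
  have : (2*(n+c)+1 : ℤ) = 0 := by exact_mod_cast h2
  omega

lemma summable_sq (c : ℤ) : Summable fun n : ℤ => 1/((n:ℝ) + (c:ℝ) + 1/2)^2 := by
  have hnat : Summable fun n : ℕ => 1/((n:ℝ) + 1/2)^2 := by
    have h1 : Summable fun n : ℕ => 1/(n:ℝ)^2 :=
      Real.summable_one_div_nat_pow.2 one_lt_two
    have h2 := ((summable_nat_add_iff (f := fun n : ℕ => 1/(n:ℝ)^2) 1).2 h1).mul_left 4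
    apply h2.of_nonneg_of_le (fun n => by positivity)
    intro n
    have hn : (0:ℝ) ≤ (n:ℝ) := n.cast_nonneg
    rw [mul_one_div, div_le_div_iff₀ (by positivity) (by push_cast; positivity)]
    push_cast
    nlinarith
  have base : Summable fun n : ℤ => 1/((n:ℝ) + 1/2)^2 := by
    refine Summable.of_nat_of_neg_add_one (f := fun n : ℤ => 1/((n:ℝ)+1/2)^2)
      (hnat.congr fun n => by push_cast; ring_nf) (hnat.congr fun n => by push_cast; ring_nf)
  have := (Equiv.addRight c).summable_iff.2 base
  apply this.congr
  intro n
  simp only [Equiv.coe_addRight, Function.comp]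
  push_cast
  ring_nf

lemma abs_bound (x y : ℝ) (hx : x ≠ 0) (hy : y ≠ 0) :
    |1/x * (1/y)| ≤ 1/x^2 + 1/y^2 := by
  have hx' : 0 < |x| := abs_pos.2 hx
  have hy' : 0 < |y| := abs_pos.2 hy
  rw [abs_mul, abs_one_div, abs_one_div]
  rcases le_total |x| |y| with h | h
  · have h1 : 1/|x| * (1/|y|) ≤ 1/x^2 := by
      rw [one_div_mul_one_div, div_le_div_iff₀ (by positivity) (by positivity)]
      nlinarith [sq_abs x]
    have : (0:ℝ) < 1/y^2 := by positivity
    linarith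
  · have h1 : 1/|x| * (1/|y|) ≤ 1/y^2 := by
      rw [one_div_mul_one_div, div_le_div_iff₀ (by positivity) (by positivity)]
      nlinarith [sq_abs y]
    have : (0:ℝ) < 1/x^2 := by positivity
    linarith

lemma summable_pair (a b : ℤ) :
    Summable fun n : ℤ => 1/((n:ℝ) + (a:ℝ) + 1/2) * (1/((n:ℝ) + (b:ℝ) + 1/2)) := by
  apply Summable.of_abs
  apply ((summable_sq a).add (summable_sq b)).of_nonneg_of_le (fun n => abs_nonneg _)
  exact fun n => abs_bound _ _ (denom_ne a n) (denom_ne b n)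

lemma tendsto_G : Tendsto (fun n : ℕ => 1/((n:ℝ) + 1/2)) atTop (𝓝 0) := by
  have h1 : Tendsto (fun n : ℕ => (n:ℝ) + 1/2) atTop atTop :=
    tendsto_atTop_add_const_right _ _ tendsto_natCast_atTop_atTop
  simpa [one_div, Pi.inv_def] using h1.inv_tendsto_atTop

lemma tendsto_H : Tendsto (fun n : ℕ => 1/(1/2 - (n:ℝ))) atTop (𝓝 0) := by
  have h1 : Tendsto (fun n : ℕ => (n:ℝ) - 1/2) atTop atTop :=
    tendsto_atTop_add_const_right _ _ tendsto_natCast_atTop_atTop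
  have h2 := (h1.inv_tendsto_atTop).neg
  simp only [neg_zero] at h2
  apply h2.congr
  intro n
  simp only [Pi.inv_apply, one_div]
  rw [← inv_neg]
  ring_nf

lemma hasSum_base :
    HasSum (fun n : ℤ => 1/((n:ℝ) + ((0:ℤ):ℝ) + 1/2) * (1/((n:ℝ) + ((1:ℤ):ℝ) + 1/2))) 0 := by
  set f : ℤ → ℝ := fun n => 1/((n:ℝ) + ((0:ℤ):ℝ) + 1/2) * (1/((n:ℝ) + ((1:ℤ):ℝ) + 1/2)) with hf
  have hsum : Summable f := summable_pair 0 1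
  have key : ∀ n : ℤ, f n = 1/((n:ℝ) + 1/2) - 1/((n:ℝ) + 3/2) := by
    intro n
    have h1 : ((n:ℝ) + 1/2) ≠ 0 := by
      intro h
      have : ((2*n+1 : ℤ) : ℝ) = 0 := by push_cast; linarith
      have : (2*n+1 : ℤ) = 0 := by exact_mod_cast this
      omega
    have h2 : ((n:ℝ) + 3/2) ≠ 0 := by
      intro h
      have : ((2*n+3 : ℤ) : ℝ) = 0 := by push_cast; linarith
      have : (2*n+3 : ℤ) = 0 := by exact_mod_cast this
      omega
    rw [hf]
    push_cast
    rw [div_sub_div _ _ h1 h2, one_div_mul_one_div]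
    norm_num
    exact Or.inl (by ring)
  set G : ℕ → ℝ := fun n => 1/((n:ℝ) + 1/2) with hG
  have hpos : HasSum (fun n : ℕ => f n) 2 := by
    have hsum' : Summable fun n : ℕ => f n := hsum.comp_injective fun a b h => by
      exact_mod_cast h
    rw [hasSum_iff_tendsto_nat_of_summable_norm
      (by simpa [Real.norm_eq_abs] using hsum'.abs)]
    have heq : ∀ N : ℕ, ∑ i ∈ Finset.range N, f i = G 0 - G N := by
      intro N
      rw [← Finset.sum_range_sub' G N]
      apply Finset.sum_congr rfl
      intro i _
      rw [key, hG]
      push_cast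
      ring_nf
    simp only [heq]
    have h2 : G 0 - 0 = 2 := by norm_num [hG]
    rw [← h2]
    exact tendsto_const_nhds.sub tendsto_G
  have hneg : HasSum (fun n : ℕ => f (-(n+1))) (-2) := by
    set H : ℕ → ℝ := fun n => 1/(1/2 - (n:ℝ)) with hH
    have hsum' : Summable fun n : ℕ => f (-(n+1)) := hsum.comp_injective fun a b h => by
      simp only [neg_inj, add_left_inj] at h
      exact_mod_cast h
    rw [hasSum_iff_tendsto_nat_of_summable_norm
      (by simpa [Real.norm_eq_abs] using hsum'.abs)]
    have heq : ∀ N : ℕ, ∑ i ∈ Finset.range N, f (-(i+1)) = -(H 0 - H N) := by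
      intro N
      rw [← Finset.sum_range_sub' H N, ← Finset.sum_neg_distrib]
      apply Finset.sum_congr rfl
      intro i _
      rw [key, hH]
      push_cast
      ring_nf
    simp only [heq]
    have h2 : -(H 0 - 0) = -2 := by norm_num [hH]
    rw [← h2]
    exact (tendsto_const_nhds.sub tendsto_H).neg
  have := HasSum.of_nat_of_neg_add_one hpos hneg
  simpa using this

lemma aux_pf (x y c : ℝ) (hx : x ≠ 0) (hy : y ≠ 0) (hc : c ≠ 0) (h : y - x = c) :
    1/x * (1/y) = 1/c * (1/x - 1/y) := by
  have h' : c = y - x := h.symm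
  subst h'
  field_simp

lemma tsum_consec (c : ℤ) :
    ∑' n : ℤ, 1/((n:ℝ) + (c:ℝ) + 1/2) * (1/((n:ℝ) + ((c+1:ℤ):ℝ) + 1/2)) = 0 := by
  have h := (Equiv.addRight c).tsum_eq
    (f := fun n : ℤ => 1/((n:ℝ) + ((0:ℤ):ℝ) + 1/2) * (1/((n:ℝ) + ((1:ℤ):ℝ) + 1/2)))
  rw [hasSum_base.tsum_eq] at h
  rw [← h]
  apply tsum_congr
  intro n
  simp only [Equiv.coe_addRight]
  push_cast
  ring_nf

lemma tsum_pair_lt (a b : ℤ) (hab : a < b) :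
    ∑' n : ℤ, 1/((n:ℝ) + (a:ℝ) + 1/2) * (1/((n:ℝ) + (b:ℝ) + 1/2)) = 0 := by
  set d : ℕ := (b - a).toNat with hd
  have hbd : b = a + d := by omega
  have hd1 : 0 < d := by omega
  have key : ∀ n : ℤ, 1/((n:ℝ) + (a:ℝ) + 1/2) * (1/((n:ℝ) + (b:ℝ) + 1/2))
      = (1/(d:ℝ)) * ∑ k ∈ Finset.range d,
        (1/((n:ℝ) + ((a+k:ℤ):ℝ) + 1/2) * (1/((n:ℝ) + ((a+k+1:ℤ):ℝ) + 1/2))) := by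
    intro n
    have hsum : ∑ k ∈ Finset.range d,
        (1/((n:ℝ) + ((a+k:ℤ):ℝ) + 1/2) * (1/((n:ℝ) + ((a+k+1:ℤ):ℝ) + 1/2)))
        = (fun k : ℕ => 1/((n:ℝ) + (a:ℝ) + (k:ℝ) + 1/2)) 0
          - (fun k : ℕ => 1/((n:ℝ) + (a:ℝ) + (k:ℝ) + 1/2)) d := by
      rw [← Finset.sum_range_sub' (fun k : ℕ => 1/((n:ℝ) + (a:ℝ) + (k:ℝ) + 1/2)) d]
      apply Finset.sum_congr rfl
      intro k _
      have h1 : (n:ℝ) + (a:ℝ) + (k:ℝ) + 1/2 ≠ 0 := by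
        have h := denom_ne (a+k) n; push_cast at h; intro hc; exact h (by linarith)
      have h2 : (n:ℝ) + (a:ℝ) + ((k:ℝ)+1) + 1/2 ≠ 0 := by
        have h := denom_ne (a+k+1) n; push_cast at h; intro hc; exact h (by linarith)
      push_cast
      rw [div_sub_div _ _ h1 h2, one_div_mul_one_div]
      norm_num
      ring_nf
    rw [hsum]
    have hx := denom_ne a n
    have hdne : (d:ℝ) ≠ 0 := Nat.cast_ne_zero.2 hd1.ne'
    have hy' : (n:ℝ) + (a:ℝ) + (d:ℝ) + 1/2 ≠ 0 := by
      have h := denom_ne b n; rw [hbd] at h; push_cast at h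
      intro hc; exact h (by linarith)
    simp only [Nat.cast_zero, add_zero]
    rw [hbd]
    push_cast
    rw [show ((n:ℝ)+((a:ℝ)+(d:ℝ))+1/2) = ((n:ℝ)+(a:ℝ)+(d:ℝ)+1/2) by ring]
    exact aux_pf _ _ _ hx hy' hdne (by ring)
  rw [tsum_congr key, tsum_mul_left, Summable.tsum_finsetSum
    (fun (k : ℕ) _ => summable_pair (a+k) (a+k+1))]
  have : ∀ k ∈ Finset.range d,
      ∑' n : ℤ, 1/((n:ℝ) + ((a+k:ℤ):ℝ) + 1/2) * (1/((n:ℝ) + ((a+k+1:ℤ):ℝ) + 1/2)) = 0 :=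
    fun k _ => tsum_consec (a+k)
  rw [Finset.sum_congr rfl this]
  simp

lemma tsum_pair (a b : ℤ) (hab : a ≠ b) :
    ∑' n : ℤ, 1/((n:ℝ) + (a:ℝ) + 1/2) * (1/((n:ℝ) + (b:ℝ) + 1/2)) = 0 := by
  rcases lt_or_gt_of_ne hab with h | h
  · exact tsum_pair_lt a b h
  · rw [tsum_congr (fun n : ℤ => mul_comm (1/((n:ℝ) + (a:ℝ) + 1/2)) (1/((n:ℝ) + (b:ℝ) + 1/2)))]
    exact tsum_pair_lt b a h

lemma main_finset (s : Finset ℤ) (hs : 2 ≤ s.card) :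
    (Summable fun n : ℤ => ∏ c ∈ s, 1/((n:ℝ) + (c:ℝ) + 1/2)) ∧
      (∑' n : ℤ, ∏ c ∈ s, 1/((n:ℝ) + (c:ℝ) + 1/2)) = 0 := by
  induction s using Finset.strongInduction with
  | _ s ih =>
  rcases eq_or_lt_of_le hs with h2 | h3
  · obtain ⟨a, b, hab, rfl⟩ := Finset.card_eq_two.1 h2.symm
    constructor
    · apply (summable_pair a b).congr
      intro n
      rw [Finset.prod_pair hab]
    · rw [tsum_congr (fun n : ℤ => Finset.prod_pair (M := ℝ) hab)]
      exact tsum_pair a b hab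
  · obtain ⟨a, ha, b, hb, hab⟩ := Finset.one_lt_card.1 (show 1 < s.card by omega)
    have hbne : (b:ℝ) - (a:ℝ) ≠ 0 := by
      intro h
      have hba : (a:ℝ) = (b:ℝ) := by linarith
      exact hab (by exact_mod_cast hba)
    have iha := ih (s.erase a) (Finset.erase_ssubset ha)
      (by rw [Finset.card_erase_of_mem ha]; omega)
    have ihb := ih (s.erase b) (Finset.erase_ssubset hb)
      (by rw [Finset.card_erase_of_mem hb]; omega)
    have key : ∀ n : ℤ, ∏ c ∈ s, 1/((n:ℝ) + (c:ℝ) + 1/2)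
        = (1/((b:ℝ) - (a:ℝ))) * ((∏ c ∈ s.erase b, 1/((n:ℝ) + (c:ℝ) + 1/2))
            - ∏ c ∈ s.erase a, 1/((n:ℝ) + (c:ℝ) + 1/2)) := by
      intro n
      set P : ℝ := ∏ c ∈ (s.erase a).erase b, 1/((n:ℝ) + (c:ℝ) + 1/2) with hP
      have h1 : ∏ c ∈ s.erase a, 1/((n:ℝ) + (c:ℝ) + 1/2)
          = 1/((n:ℝ) + (b:ℝ) + 1/2) * P := by
        rw [hP, ← Finset.prod_erase_mul _ _ (Finset.mem_erase.2 ⟨hab.symm, hb⟩), mul_comm]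
      have h2 : ∏ c ∈ s.erase b, 1/((n:ℝ) + (c:ℝ) + 1/2)
          = 1/((n:ℝ) + (a:ℝ) + 1/2) * P := by
        rw [hP, Finset.erase_right_comm,
          ← Finset.prod_erase_mul _ _ (Finset.mem_erase.2 ⟨hab, ha⟩), mul_comm]
      have h0 : ∏ c ∈ s, 1/((n:ℝ) + (c:ℝ) + 1/2)
          = 1/((n:ℝ) + (a:ℝ) + 1/2) * (1/((n:ℝ) + (b:ℝ) + 1/2) * P) := by
        rw [← Finset.prod_erase_mul s _ ha, h1]
        ring
      have haux := aux_pf ((n:ℝ) + (a:ℝ) + 1/2) ((n:ℝ) + (b:ℝ) + 1/2) ((b:ℝ) - (a:ℝ))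
        (denom_ne a n) (denom_ne b n) hbne (by ring)
      rw [h0, h1, h2, ← mul_assoc, haux]
      ring
    obtain ⟨sa, ta⟩ := iha
    obtain ⟨sb, tb⟩ := ihb
    constructor
    · exact ((sb.sub sa).mul_left _).congr (fun n => (key n).symm)
    · rw [tsum_congr key, tsum_mul_left, Summable.tsum_sub sb sa, tb, ta]
      simp

/-- For `r ≥ 2` and pairwise distinct integers `a₁, …, a_r`,
`∑_{n∈ℤ} ∏_i 1/(n+a_i+1/2) = 0`, the sum converging absolutely. -/
theorem sum_partial_fractions_distinct_eq_zero
    (r : ℕ) (hr : 2 ≤ r) (a : Fin r → ℤ) (ha : Function.Injective a) :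
    (Summable fun n : ℤ => ∏ i : Fin r, 1 / ((n : ℝ) + (a i : ℝ) + 1 / 2)) ∧
      (∑' n : ℤ, ∏ i : Fin r, 1 / ((n : ℝ) + (a i : ℝ) + 1 / 2)) = 0 := by
  have himg : (Finset.univ.image a).card = r := by
    rw [Finset.card_image_of_injective _ ha, Finset.card_univ, Fintype.card_fin]
  have h := main_finset (Finset.univ.image a) (by rw [himg]; exact hr)
  have hprod : ∀ n : ℤ, (∏ i : Fin r, 1 / ((n : ℝ) + (a i : ℝ) + 1 / 2))
      = ∏ c ∈ Finset.univ.image a, 1/((n:ℝ) + (c:ℝ) + 1/2) :=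
    fun n => (Finset.prod_image (f := fun c : ℤ => 1/((n:ℝ) + (c:ℝ) + 1/2)) (g := a)
      (fun x _ y _ hxy => ha hxy)).symm
  constructor
  · exact h.1.congr (fun n => (hprod n).symm)
  · rw [tsum_congr hprod]
    exact h.2
end

section
/- For integers k, n ≥ 1 let a_{k,n} := 1/(n+k+1/2) + 1/(n−k+1/2). Then for all integers m, n ≥ 1, ∑_{k=1}^∞ a_{k,n}·a_{k,m} = π²·δ_{n,m} − 2/( (n+1/2)(m+1/2) ), where δ_{n,m} is the Kronecker delta and the series converges absolutely. -/
open Filter Finset Real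

/-- The matrix entries `a_{k,n} = 1/(n+k+1/2) + 1/(n−k+1/2)`, for `k, n ≥ 1`. -/
noncomputable def aMat (k n : ℕ) : ℝ :=
  1 / ((n : ℝ) + (k : ℝ) + 1 / 2) + 1 / ((n : ℝ) - (k : ℝ) + 1 / 2)

lemma half_ne_zero' (n k : ℕ) : (n : ℝ) - (k : ℝ) + 1/2 ≠ 0 := by
  intro h
  have h2 : ((2*n+1 : ℕ) : ℝ) = ((2*k : ℕ) : ℝ) := by push_cast; linarith
  have h3 : (2*n+1 : ℕ) = 2*k := Nat.cast_injective h2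
  omega

lemma hasSum_hhalf : HasSum (fun j : ℕ => 1 / ((j:ℝ) + 1/2)^2) (π^2/2) := by
  set f : ℕ → ℝ := fun n : ℕ => (1 : ℝ) / (n : ℝ) ^ 2 with hfdef
  have hf : HasSum f (π ^ 2 / 6) := hasSum_zeta_two
  have heN : HasSum (fun k : ℕ => f (2*k)) (π^2/24) := by
    have h := hf.mul_left (1/4)
    have h2 : (π^2/24 : ℝ) = 1/4 * (π^2/6) := by ring
    rw [h2]
    refine h.congr_fun fun k => ?_
    simp only [hfdef]
    push_cast; ring
  have hosum : Summable (fun k : ℕ => f (2*k+1)) := by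
    have hinj : Function.Injective (fun k : ℕ => 2*k+1) := by
      intro a b hab; simp only [] at hab; omega
    exact hf.summable.comp_injective hinj
  have ho : HasSum (fun k : ℕ => f (2*k+1)) (π^2/8) := by
    have h1 := HasSum.even_add_odd heN hosum.hasSum
    have h2 : π^2/24 + ∑' k : ℕ, f (2*k+1) = π^2/6 := h1.unique hf
    have h3 : ∑' k : ℕ, f (2*k+1) = π^2/8 := by linarith
    exact h3 ▸ hosum.hasSum
  have h4 := ho.mul_left 4
  have h5 : (π^2/2 : ℝ) = 4 * (π^2/8) := by ring
  rw [h5]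
  refine h4.congr_fun fun k => ?_
  simp only [hfdef]
  have hk : ((k:ℝ)+1/2) ≠ 0 := by positivity
  have hk2 : ((2*k+1 : ℕ):ℝ) ≠ 0 := by positivity
  field_simp
  push_cast; ring


lemma hasSum_sq (n : ℕ) :
    HasSum (fun k : ℕ => 1 / ((n:ℝ) + 1/2 + ((k:ℝ)+1))^2 + 1 / ((n:ℝ) + 1/2 - ((k:ℝ)+1))^2)
      (π^2 - 1/((n:ℝ)+1/2)^2) := by
  set h : ℕ → ℝ := fun j : ℕ => 1 / ((j:ℝ) + 1/2)^2 with hhdef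
  have hS : HasSum h (π^2/2) := hasSum_hhalf
  -- first family
  have hF1 : HasSum (fun k : ℕ => 1 / ((n:ℝ) + 1/2 + ((k:ℝ)+1))^2)
      (π^2/2 - ∑ i ∈ range (n+1), h i) := by
    have h1 : HasSum (fun k : ℕ => h (k + (n+1))) (π^2/2 - ∑ i ∈ range (n+1), h i) :=
      (hasSum_nat_add_iff' (n+1)).mpr hS
    refine h1.congr_fun fun k => ?_
    simp only [hhdef]
    push_cast; ring_nf
  -- second family
  set F2 : ℕ → ℝ := fun k : ℕ => 1 / ((n:ℝ) + 1/2 - ((k:ℝ)+1))^2 with hF2def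
  have h2 : HasSum (fun k : ℕ => F2 (k + n)) (π^2/2) := by
    refine hS.congr_fun fun k => ?_
    simp only [hhdef, hF2def]
    have : (n:ℝ) + 1/2 - (((k+n : ℕ):ℝ)+1) = -((k:ℝ) + 1/2) := by push_cast; ring
    rw [this, neg_sq]
  have hF2 : HasSum F2 (π^2/2 + ∑ i ∈ range n, F2 i) := (hasSum_nat_add_iff n).mp h2
  have hsum_eq : ∑ i ∈ range n, F2 i = ∑ i ∈ range n, h i := by
    rw [← Finset.sum_range_reflect h n]
    refine Finset.sum_congr rfl fun i hi => ?_
    have hi' : i < n := Finset.mem_range.mp hi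
    simp only [hhdef, hF2def]
    congr 1
    have : ((n - 1 - i : ℕ) : ℝ) = (n:ℝ) - 1 - i := by
      have h1 : (n - 1 - i : ℕ) + (1 + i) = n := by omega
      have h2 : (((n - 1 - i : ℕ) + (1 + i) : ℕ) : ℝ) = (n:ℝ) := by rw [h1]
      push_cast at h2; linarith
    rw [this]; ring
  rw [hsum_eq] at hF2
  have := hF1.add hF2
  have hval : (π^2/2 - ∑ i ∈ range (n+1), h i) + (π^2/2 + ∑ i ∈ range n, h i)
      = π^2 - 1/((n:ℝ)+1/2)^2 := by
    rw [Finset.sum_range_succ]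
    simp only [hhdef]
    ring
  rw [hval] at this
  exact this

lemma summable_a (n : ℕ) : Summable (fun k : ℕ => aMat (k+1) n) := by
  set x : ℝ := (n:ℝ) + 1/2 with hxdef
  have hx : 0 < x := by positivity
  have hbase : Summable (fun k : ℕ => 1/((k:ℝ)+1)^2) := by
    have h0 : Summable (fun k : ℕ => (1:ℝ)/(k:ℝ)^2) := hasSum_zeta_two.summable
    have h1 := (summable_nat_add_iff 1).mpr h0
    refine h1.congr fun k => ?_
    push_cast; ring
  refine Summable.of_norm_bounded_eventually_nat (g := fun k => (8*x/3) * (1/((k:ℝ)+1)^2))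
    (hbase.mul_left _) ?_
  filter_upwards [eventually_ge_atTop (2*n)] with k hk
  set u : ℝ := (k:ℝ)+1 with hudef
  have hku : (2*n:ℝ) ≤ (k:ℝ) := by exact_mod_cast hk
  have hu : 2*x ≤ u := by rw [hxdef, hudef]; linarith
  clear_value x u
  have hD : 0 < u^2 - x^2 := by nlinarith
  have h1 : x + u ≠ 0 := by nlinarith
  have h2 : x - u ≠ 0 := by
    have h3 := half_ne_zero' n (k+1); push_cast at h3
    intro hc; apply h3; rw [hxdef, hudef] at hc; linarith
  have hrw : aMat (k+1) n = -(2*x) / (u^2 - x^2) := by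
    unfold aMat
    push_cast
    have e1 : (n:ℝ) + ((k:ℝ)+1) + 1/2 = x + u := by rw [hxdef, hudef]; ring
    have e2 : (n:ℝ) - ((k:ℝ)+1) + 1/2 = x - u := by rw [hxdef, hudef]; ring
    rw [e1, e2]
    field_simp
    ring
  rw [hrw, Real.norm_eq_abs, abs_div, abs_neg, abs_of_pos (by positivity : (0:ℝ) < 2*x),
    abs_of_pos hD, mul_one_div]
  rw [div_le_div_iff₀ hD (by nlinarith : (0:ℝ) < u^2)]
  have hu2 : (0:ℝ) ≤ u^2 - 4*x^2 := by nlinarith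
  have h5 : (0:ℝ) ≤ x*(u^2-4*x^2) := mul_nonneg hx.le hu2
  have h6 : 8*x/3*(u^2-x^2) - 2*x*u^2 = 2/3*(x*(u^2-4*x^2)) := by ring
  linarith [h5, h6]

lemma hasSum_a (n : ℕ) : HasSum (fun k : ℕ => aMat (k+1) n) (-(1/((n:ℝ)+1/2))) := by
  set b : ℕ → ℝ := fun j => 1/((j:ℝ)+1/2) with hbdef
  have hbpos : ∀ j, 0 ≤ b j := fun j => by positivity
  have hbanti : ∀ i j : ℕ, i ≤ j → b j ≤ b i := by
    intro i j hij
    simp only [hbdef]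
    apply one_div_le_one_div_of_le (by positivity)
    have : (i:ℝ) ≤ j := by exact_mod_cast hij
    linarith
  have key : ∀ K, n ≤ K →
      ∑ k ∈ range K, aMat (k+1) n = (∑ j ∈ Ico (K-n) (K+n+1), b j) - b n := by
    intro K hK
    induction K, hK using Nat.le_induction with
    | base =>
      have hsplit1 : ∑ j ∈ Ico (n-n) (n+n+1), b j
          = ∑ j ∈ Ico 0 (n+1), b j + ∑ j ∈ Ico (n+1) (n+n+1), b j := by
        rw [Nat.sub_self]
        exact (Finset.sum_Ico_consecutive b (by omega) (by omega)).symm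
      have hterm : ∀ k ∈ range n, aMat (k+1) n = b (n+1+k) + b (n-1-k) := by
        intro k hk
        have hk' : k < n := Finset.mem_range.mp hk
        unfold aMat
        simp only [hbdef]
        have c1 : ((n+1+k : ℕ):ℝ) = (n:ℝ)+1+k := by push_cast; ring
        have c2 : ((n-1-k : ℕ):ℝ) = (n:ℝ)-1-k := by
          have h1 : (n - 1 - k : ℕ) + (1 + k) = n := by omega
          have h2 : (((n - 1 - k : ℕ) + (1 + k) : ℕ) : ℝ) = (n:ℝ) := by rw [h1]
          push_cast at h2; linarith
        rw [c1, c2]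
        push_cast
        ring
      rw [Finset.sum_congr rfl hterm, Finset.sum_add_distrib, hsplit1]
      have e1 : ∑ k ∈ range n, b (n+1+k) = ∑ j ∈ Ico (n+1) (n+n+1), b j := by
        rw [Finset.sum_Ico_eq_sum_range]
        apply Finset.sum_congr _ fun i _ => rfl
        congr 1
        omega
      have e2 : ∑ k ∈ range n, b (n-1-k) = ∑ j ∈ range n, b j := by
        rw [← Finset.sum_range_reflect b n]
      have e3 : ∑ j ∈ Ico 0 (n+1), b j = ∑ j ∈ range n, b j + b n := by
        rw [← Finset.range_eq_Ico, Finset.sum_range_succ]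
      rw [e1, e2, e3]
      ring
    | succ K hK ih =>
      have hterm : aMat (K+1) n = b (K+n+1) - b (K-n) := by
        unfold aMat
        simp only [hbdef]
        have c1 : ((K+n+1 : ℕ):ℝ) = (K:ℝ)+n+1 := by push_cast; ring
        have c2 : ((K-n : ℕ):ℝ) = (K:ℝ)-n := by
          have h1 : (K - n : ℕ) + n = K := by omega
          have h2 : (((K-n:ℕ) + n : ℕ):ℝ) = (K:ℝ) := by rw [h1]
          push_cast at h2; linarith
        rw [c1, c2]
        push_cast
        rw [show (n:ℝ) - ((K:ℝ)+1) + 1/2 = -(((K:ℝ) - n) + 1/2) by ring,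
            show (n:ℝ) + ((K:ℝ)+1) + 1/2 = ((K:ℝ) + n + 1) + 1/2 by ring,
            div_neg]
        ring
      have h1 : K+1-n = (K-n)+1 := by omega
      have e : K+1+n+1 = (K+n+1)+1 := by omega
      rw [Finset.sum_range_succ, ih, hterm, h1, e,
          Finset.sum_Ico_succ_top (by omega : K-n+1 ≤ K+n+1) b,
          Finset.sum_eq_sum_Ico_succ_bot (by omega : K-n < K+n+1) b]
      ring
  have hT : Tendsto (fun K : ℕ => ∑ j ∈ Ico (K-n) (K+n+1), b j) atTop (nhds 0) := by
    have hub : ∀ K : ℕ, ∑ j ∈ Ico (K-n) (K+n+1), b j ≤ (2*n+1 : ℝ) * b (K-n) := by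
      intro K
      have hcard : (Ico (K-n) (K+n+1)).card ≤ 2*n+1 := by
        rw [Nat.card_Ico]; omega
      calc ∑ j ∈ Ico (K-n) (K+n+1), b j
          ≤ (Ico (K-n) (K+n+1)).card • b (K-n) := by
            apply Finset.sum_le_card_nsmul
            intro j hj
            exact hbanti _ _ (Finset.mem_Ico.mp hj).1
        _ ≤ (2*n+1 : ℝ) * b (K-n) := by
            rw [nsmul_eq_mul]
            apply mul_le_mul_of_nonneg_right _ (hbpos _)
            exact_mod_cast hcard
    have hlim : Tendsto (fun K : ℕ => (2*n+1 : ℝ) * b (K-n)) atTop (nhds 0) := by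
      have h1 : Tendsto (fun K : ℕ => ((K - n : ℕ):ℝ) + 1/2) atTop atTop :=
        tendsto_atTop_add_const_right _ (1/2)
          (tendsto_natCast_atTop_atTop.comp (tendsto_sub_atTop_nat n))
      have h2 := h1.inv_tendsto_atTop
      have h3 : Tendsto (fun K : ℕ => b (K-n)) atTop (nhds 0) := by
        refine h2.congr fun K => ?_
        simp [hbdef, one_div]
      simpa using h3.const_mul ((2*n+1 : ℝ))
    exact squeeze_zero (fun K => Finset.sum_nonneg fun j _ => hbpos j) hub hlim
  have hev : (fun K : ℕ => (∑ j ∈ Ico (K-n) (K+n+1), b j) - b n)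
      =ᶠ[atTop] (fun K : ℕ => ∑ k ∈ range K, aMat (k+1) n) := by
    filter_upwards [eventually_ge_atTop n] with K hK using (key K hK).symm
  have hS' : Tendsto (fun K : ℕ => ∑ k ∈ range K, aMat (k+1) n) atTop (nhds (0 - b n)) :=
    (Tendsto.sub_const hT (b n)).congr' hev
  have hsum := summable_a n
  have h2 := hsum.hasSum.tendsto_sum_nat
  have h3 : ∑' k, aMat (k+1) n = 0 - b n := tendsto_nhds_unique h2 hS'
  have h4 := hsum.hasSum
  rw [h3] at h4
  simpa [hbdef] using h4


lemma sq_decomp (x u : ℝ) (h1 : x+u ≠ 0) (h2 : x-u ≠ 0) (h3 : x ≠ 0) :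
    (1/(x+u)+1/(x-u))*(1/(x+u)+1/(x-u))
      = 1/(x+u)^2 + 1/(x-u)^2 + (1/x)*(1/(x+u)+1/(x-u)) := by
  field_simp
  ring

lemma prod_decomp (x y u : ℝ) (hxu : x+u ≠ 0) (hxu' : x-u ≠ 0) (hyu : y+u ≠ 0)
    (hyu' : y-u ≠ 0) (hd : x-y ≠ 0) (hs : x+y ≠ 0) :
    (1/(x+u)+1/(x-u)) * (1/(y+u)+1/(y-u))
      = (1/(x-y))*((1/(y+u)+1/(y-u)) - (1/(x+u)+1/(x-u)))
        + (1/(x+y))*((1/(x+u)+1/(x-u)) + (1/(y+u)+1/(y-u))) := by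
  field_simp
  ring

lemma val_decomp (x y : ℝ) (hx : x ≠ 0) (hy : y ≠ 0) (hd : x-y ≠ 0) (hs : x+y ≠ 0) :
    (1/(x-y)) * (-(1/y) - -(1/x)) + (1/(x+y)) * (-(1/x) + -(1/y)) = -(2/(x*y)) := by
  field_simp
  ring

set_option maxHeartbeats 1000000 in
/-- For `m, n ≥ 1`: `∑_{k≥1} a_{k,n} a_{k,m} = π² δ_{n,m} − 2/((n+1/2)(m+1/2))`,
the series converging absolutely. -/
theorem aMat_column_inner_product
    (m n : ℕ) (hm : 1 ≤ m) (hn : 1 ≤ n) :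
    (Summable fun k : ℕ => aMat (k + 1) n * aMat (k + 1) m) ∧
      (∑' k : ℕ, aMat (k + 1) n * aMat (k + 1) m)
        = Real.pi ^ 2 * (if n = m then (1 : ℝ) else 0)
          - 2 / (((n : ℝ) + 1 / 2) * ((m : ℝ) + 1 / 2)) := by
  have hxne : ((n:ℝ) + 1/2) ≠ 0 := by positivity
  have hyne : ((m:ℝ) + 1/2) ≠ 0 := by positivity
  by_cases hnm : n = m
  · subst hnm
    have hkey : HasSum (fun k : ℕ => aMat (k+1) n * aMat (k+1) n)
        (π^2 - 2/(((n:ℝ)+1/2) * ((n:ℝ)+1/2))) := by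
      have h1 := hasSum_sq n
      have h2 := (hasSum_a n).mul_left (1/((n:ℝ)+1/2))
      have h3 := h1.add h2
      have hval : (π^2 - 1/((n:ℝ)+1/2)^2) + (1/((n:ℝ)+1/2)) * (-(1/((n:ℝ)+1/2)))
          = π^2 - 2/(((n:ℝ)+1/2) * ((n:ℝ)+1/2)) := by
        field_simp
        ring
      rw [hval] at h3
      refine h3.congr_fun fun k => ?_
      have hA : (n:ℝ) + 1/2 + ((k:ℝ)+1) ≠ 0 := by positivity
      have hB : (n:ℝ) + 1/2 - ((k:ℝ)+1) ≠ 0 := by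
        have h4 := half_ne_zero' n (k+1); push_cast at h4
        intro hc; apply h4; linarith
      have haM : aMat (k+1) n = 1/(((n:ℝ)+1/2)+((k:ℝ)+1)) + 1/(((n:ℝ)+1/2)-((k:ℝ)+1)) := by
        unfold aMat
        push_cast
        rw [show (n:ℝ)+((k:ℝ)+1)+1/2 = ((n:ℝ)+1/2)+((k:ℝ)+1) by ring,
            show (n:ℝ)-((k:ℝ)+1)+1/2 = ((n:ℝ)+1/2)-((k:ℝ)+1) by ring]
      rw [haM]
      exact sq_decomp _ _ hA hB hxne
    refine ⟨hkey.summable, ?_⟩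
    rw [hkey.tsum_eq, if_pos rfl]
    ring
  · have hd : ((n:ℝ)+1/2) - ((m:ℝ)+1/2) ≠ 0 := by
      intro h
      exact hnm (Nat.cast_injective (by linarith : (n:ℝ) = (m:ℝ)))
    have hs : ((n:ℝ)+1/2) + ((m:ℝ)+1/2) ≠ 0 := by positivity
    have hA := hasSum_a n
    have hB := hasSum_a m
    have hcomb := ((hB.sub hA).mul_left (1/(((n:ℝ)+1/2) - ((m:ℝ)+1/2)))).add
      ((hA.add hB).mul_left (1/(((n:ℝ)+1/2) + ((m:ℝ)+1/2))))
    have hval : (1/(((n:ℝ)+1/2) - ((m:ℝ)+1/2))) * (-(1/((m:ℝ)+1/2)) - -(1/((n:ℝ)+1/2)))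
        + (1/(((n:ℝ)+1/2) + ((m:ℝ)+1/2))) * (-(1/((n:ℝ)+1/2)) + -(1/((m:ℝ)+1/2)))
        = -(2 / (((n : ℝ) + 1/2) * ((m : ℝ) + 1/2))) :=
      val_decomp _ _ hxne hyne hd hs
    rw [hval] at hcomb
    have hkey : HasSum (fun k : ℕ => aMat (k+1) n * aMat (k+1) m)
        (-(2 / (((n : ℝ) + 1/2) * ((m : ℝ) + 1/2)))) := by
      refine hcomb.congr_fun fun k => ?_
      have hAx : (n:ℝ) + 1/2 + ((k:ℝ)+1) ≠ 0 := by positivity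
      have hBx : (n:ℝ) + 1/2 - ((k:ℝ)+1) ≠ 0 := by
        have h4 := half_ne_zero' n (k+1); push_cast at h4
        intro hc; apply h4; linarith
      have hAy : (m:ℝ) + 1/2 + ((k:ℝ)+1) ≠ 0 := by positivity
      have hBy : (m:ℝ) + 1/2 - ((k:ℝ)+1) ≠ 0 := by
        have h4 := half_ne_zero' m (k+1); push_cast at h4
        intro hc; apply h4; linarith
      have haMn : aMat (k+1) n = 1/(((n:ℝ)+1/2)+((k:ℝ)+1)) + 1/(((n:ℝ)+1/2)-((k:ℝ)+1)) := by
        unfold aMat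
        push_cast
        rw [show (n:ℝ)+((k:ℝ)+1)+1/2 = ((n:ℝ)+1/2)+((k:ℝ)+1) by ring,
            show (n:ℝ)-((k:ℝ)+1)+1/2 = ((n:ℝ)+1/2)-((k:ℝ)+1) by ring]
      have haMm : aMat (k+1) m = 1/(((m:ℝ)+1/2)+((k:ℝ)+1)) + 1/(((m:ℝ)+1/2)-((k:ℝ)+1)) := by
        unfold aMat
        push_cast
        rw [show (m:ℝ)+((k:ℝ)+1)+1/2 = ((m:ℝ)+1/2)+((k:ℝ)+1) by ring,
            show (m:ℝ)-((k:ℝ)+1)+1/2 = ((m:ℝ)+1/2)-((k:ℝ)+1) by ring]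
      rw [haMn, haMm]
      exact prod_decomp _ _ _ hAx hBx hAy hBy hd hs
    refine ⟨hkey.summable, ?_⟩
    rw [hkey.tsum_eq, if_neg hnm]
    ring
end

section
/- For integers k, n ≥ 1 let a_{k,n} := 1/(n+k+1/2) + 1/(n−k+1/2), and for a square-summable real sequence x define (Ax)_k := ∑_{n=1}^∞ a_{k,n} x_n. Then for every square-summable real sequence x, ∑_{k=1}^∞ (Ax)_k² + 2·( ∑_{n=1}^∞ x_n/(n+1/2) )² = π² ∑_{n=1}^∞ x_n². -/
open MeasureTheory intervalIntegral Real Complex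

lemma int_sin_mul {c : ℝ} (hc : c ≠ 0) :
    ∫ θ in (0:ℝ)..π, Real.sin (c*θ) = (1 - Real.cos (c*π))/c := by
  rw [intervalIntegral.integral_comp_mul_left (fun x => Real.sin x) hc, integral_sin]
  simp [mul_comm, div_eq_inv_mul]

lemma int_cos_mul {c : ℝ} (hc : c ≠ 0) :
    ∫ θ in (0:ℝ)..π, Real.cos (c*θ) = Real.sin (c*π)/c := by
  rw [intervalIntegral.integral_comp_mul_left (fun x => Real.cos x) hc, integral_cos]
  simp [mul_comm, div_eq_inv_mul]

lemma int_sin_mul_cos_mul {a b : ℝ} (h1 : a + b ≠ 0) (h2 : a - b ≠ 0) :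
    ∫ θ in (0:ℝ)..π, Real.sin (a*θ) * Real.cos (b*θ)
      = ((1 - Real.cos ((a+b)*π))/(a+b) + (1 - Real.cos ((a-b)*π))/(a-b))/2 := by
  have key : ∀ θ : ℝ, Real.sin (a*θ) * Real.cos (b*θ)
      = (Real.sin ((a+b)*θ) + Real.sin ((a-b)*θ))/2 := by
    intro θ
    rw [add_mul, sub_mul, Real.sin_add, Real.sin_sub]
    ring
  rw [intervalIntegral.integral_congr (g := fun θ => (Real.sin ((a+b)*θ) + Real.sin ((a-b)*θ))/2)
    (fun θ _ => key θ)]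
  have i1 : IntervalIntegrable (fun θ => Real.sin ((a+b)*θ)) volume 0 π :=
    (Real.continuous_sin.comp (continuous_const.mul continuous_id)).intervalIntegrable _ _
  have i2 : IntervalIntegrable (fun θ => Real.sin ((a-b)*θ)) volume 0 π :=
    (Real.continuous_sin.comp (continuous_const.mul continuous_id)).intervalIntegrable _ _
  simp_rw [div_eq_mul_inv, intervalIntegral.integral_mul_const,
    intervalIntegral.integral_add i1 i2, int_sin_mul h1, int_sin_mul h2]
  ring

lemma int_sin_mul_sin_mul {a b : ℝ} (h1 : a + b ≠ 0) :
    ∫ θ in (0:ℝ)..π, Real.sin (a*θ) * Real.sin (b*θ)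
      = (if a = b then π - Real.sin ((a+b)*π)/(a+b)
         else Real.sin ((a-b)*π)/(a-b) - Real.sin ((a+b)*π)/(a+b))/2 := by
  have key : ∀ θ : ℝ, Real.sin (a*θ) * Real.sin (b*θ)
      = (Real.cos ((a-b)*θ) - Real.cos ((a+b)*θ))/2 := by
    intro θ
    rw [add_mul, sub_mul, Real.cos_add, Real.cos_sub]
    ring
  rw [intervalIntegral.integral_congr (g := fun θ => (Real.cos ((a-b)*θ) - Real.cos ((a+b)*θ))/2)
    (fun θ _ => key θ)]
  have i1 : IntervalIntegrable (fun θ => Real.cos ((a-b)*θ)) volume 0 π :=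
    (Real.continuous_cos.comp (continuous_const.mul continuous_id)).intervalIntegrable _ _
  have i2 : IntervalIntegrable (fun θ => Real.cos ((a+b)*θ)) volume 0 π :=
    (Real.continuous_cos.comp (continuous_const.mul continuous_id)).intervalIntegrable _ _
  simp_rw [div_eq_mul_inv, intervalIntegral.integral_mul_const,
    intervalIntegral.integral_sub i1 i2, int_cos_mul h1]
  by_cases h : a = b
  · subst h
    rw [if_pos rfl]
    simp only [sub_self, zero_mul, Real.cos_zero, intervalIntegral.integral_const, smul_eq_mul,
      mul_one, sub_zero]
    ring
  · rw [if_neg h, int_cos_mul (sub_ne_zero.mpr h)]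
    ring

lemma half_odd_ne (j : ℤ) : ((j:ℝ) + 1/2) ≠ 0 := by
  have h : (2*j+1 : ℤ) ≠ 0 := by omega
  have e : (j:ℝ) + 1/2 = ((2*j+1 : ℤ):ℝ)/2 := by push_cast; ring
  rw [e]
  exact div_ne_zero (Int.cast_ne_zero.mpr h) two_ne_zero

lemma cos_half_int (j : ℤ) : Real.cos (((j:ℝ) + 1/2)*π) = 0 := by
  have e : ((j:ℝ) + 1/2)*π = j*π + π/2 := by ring
  rw [e, Real.cos_add, Real.cos_pi_div_two, Real.sin_pi_div_two, Real.sin_int_mul_pi]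
  ring

/-- coefficient function -/
noncomputable def fc (k : ℤ) (n : ℕ) : ℝ :=
  1/((n:ℝ) + 3/2 + k) + 1/((n:ℝ) + 3/2 - k)

lemma fc_neg (k : ℤ) (n : ℕ) : fc (-k) n = fc k n := by
  simp only [fc, Int.cast_neg]
  ring

lemma key1 (k : ℤ) (n : ℕ) :
    ∫ θ in (0:ℝ)..π, Real.sin (((n:ℝ)+3/2)*θ) * Real.cos ((k:ℝ)*θ) = fc k n / 2 := by
  have e1 : (n:ℝ)+3/2 + k = ((n+k+1 : ℤ):ℝ) + 1/2 := by push_cast; ring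
  have e2 : (n:ℝ)+3/2 - k = ((n-k+1 : ℤ):ℝ) + 1/2 := by push_cast; ring
  rw [int_sin_mul_cos_mul (e1 ▸ half_odd_ne _) (e2 ▸ half_odd_ne _)]
  rw [fc, e1, e2, cos_half_int, cos_half_int]
  ring

lemma key2 (n m : ℕ) :
    ∫ θ in (0:ℝ)..π, Real.sin (((n:ℝ)+3/2)*θ) * Real.sin (((m:ℝ)+3/2)*θ)
      = if n = m then π/2 else 0 := by
  have h1 : ((n:ℝ)+3/2) + ((m:ℝ)+3/2) ≠ 0 := by positivity
  rw [int_sin_mul_sin_mul h1]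
  have e1 : ((n:ℝ)+3/2) + ((m:ℝ)+3/2) = ((n+m+3 : ℕ):ℝ) := by push_cast; ring
  have es : Real.sin ((((n:ℝ)+3/2) + ((m:ℝ)+3/2))*π) = 0 := by
    rw [e1]
    exact_mod_cast Real.sin_int_mul_pi (n+m+3 : ℕ)
  rw [es]
  by_cases h : n = m
  · subst h
    rw [if_pos rfl, if_pos rfl]
    ring
  · have hab : ((n:ℝ)+3/2) ≠ ((m:ℝ)+3/2) := by
      intro hh
      exact h (Nat.cast_injective (by linarith : (n:ℝ) = m))
    rw [if_neg hab, if_neg h]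
    have e2 : ((n:ℝ)+3/2) - ((m:ℝ)+3/2) = ((n - m : ℤ):ℝ) := by push_cast; ring
    have es2 : Real.sin (((((n:ℝ)+3/2)) - ((m:ℝ)+3/2))*π) = 0 := by
      rw [e2]; exact Real.sin_int_mul_pi _
    rw [es2]
    ring
open MeasureTheory intervalIntegral Real Complex in
lemma int_symmetrize (g : ℝ → ℂ) (hg : Continuous g) :
    ∫ x in (-π)..π, g x = ∫ x in (0:ℝ)..π, (g x + g (-x)) := by
  have i0 : ∀ (a b : ℝ), IntervalIntegrable g volume a b := fun a b => hg.intervalIntegrable a b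
  have i1 : IntervalIntegrable (fun x => g (-x)) volume 0 π :=
    (hg.comp continuous_neg).intervalIntegrable 0 π
  have h1 : ∫ x in (0:ℝ)..π, g (-x) = ∫ x in (-π)..(0:ℝ), g x := by
    have := intervalIntegral.integral_comp_neg (a := (0:ℝ)) (b := π) (f := g)
    simpa using this
  rw [intervalIntegral.integral_add (i0 0 π) i1, h1, add_comm]
  exact (intervalIntegral.integral_add_adjacent_intervals (i0 (-π) 0) (i0 0 π)).symm

open MeasureTheory intervalIntegral Real Complex in
lemma intC1 (k : ℤ) (n : ℕ) :
    ∫ x in (-π)..π, Complex.exp (-(k:ℂ) * x * Complex.I)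
        * ((Real.sin (((n:ℝ)+3/2)*|x|) : ℝ) : ℂ) = ((fc k n : ℝ) : ℂ) := by
  set a : ℝ := (n:ℝ)+3/2 with ha
  set F : ℝ → ℂ := fun x => Complex.exp (-(k:ℂ) * x * Complex.I)
      * ((Real.sin (a*|x|) : ℝ) : ℂ) with hF
  have hg : Continuous F := by
    apply Continuous.mul
    · exact Complex.continuous_exp.comp
        (((continuous_const.mul Complex.continuous_ofReal).mul continuous_const))
    · exact Complex.continuous_ofReal.comp
        (Real.continuous_sin.comp (continuous_const.mul _root_.continuous_abs))
  rw [int_symmetrize F hg]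
  have congr1 : ∀ x ∈ Set.uIcc (0:ℝ) π,
      F x + F (-x) = ((2 * (Real.sin (a*x) * Real.cos ((k:ℝ)*x)) : ℝ) : ℂ) := by
    intro x hx
    rw [Set.uIcc_of_le Real.pi_pos.le] at hx
    have hxabs : |x| = x := _root_.abs_of_nonneg hx.1
    simp only [hF, abs_neg, hxabs]
    have e1 : -(k:ℂ) * x * Complex.I = -(((k:ℝ)*x : ℝ) : ℂ) * Complex.I := by push_cast; ring
    have e2 : -(k:ℂ) * ((-x : ℝ) : ℂ) * Complex.I = (((k:ℝ)*x : ℝ) : ℂ) * Complex.I := by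
      push_cast; ring
    rw [e1, e2]
    have ecos := (Complex.two_cos (x := (((k:ℝ)*x : ℝ) : ℂ))).symm
    have : Complex.exp (-(((k:ℝ)*x:ℝ):ℂ) * Complex.I) * ((Real.sin (a*x) : ℝ) : ℂ)
        + Complex.exp ((((k:ℝ)*x:ℝ):ℂ) * Complex.I) * ((Real.sin (a*x) : ℝ) : ℂ)
        = (2 * Complex.cos (((k:ℝ)*x : ℝ):ℂ)) * ((Real.sin (a*x) : ℝ) : ℂ) := by
      rw [← ecos]; ring
    rw [this, ← Complex.ofReal_cos]
    push_cast
    ring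
  rw [intervalIntegral.integral_congr congr1, intervalIntegral.integral_ofReal]
  rw [intervalIntegral.integral_const_mul, key1 k n]
  push_cast
  ring

open MeasureTheory intervalIntegral Real Complex in
lemma intC2 (n m : ℕ) :
    ∫ x in (-π)..π, ((Real.sin (((n:ℝ)+3/2)*|x|) * Real.sin (((m:ℝ)+3/2)*|x|) : ℝ) : ℂ)
      = if n = m then ((π : ℝ) : ℂ) else 0 := by
  set F : ℝ → ℂ := fun x =>
      ((Real.sin (((n:ℝ)+3/2)*|x|) * Real.sin (((m:ℝ)+3/2)*|x|) : ℝ) : ℂ) with hF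
  have hg : Continuous F := by
    apply Complex.continuous_ofReal.comp
    exact ((Real.continuous_sin.comp (continuous_const.mul _root_.continuous_abs)).mul
      (Real.continuous_sin.comp (continuous_const.mul _root_.continuous_abs)))
  rw [int_symmetrize F hg]
  have congr1 : ∀ x ∈ Set.uIcc (0:ℝ) π,
      F x + F (-x)
      = ((2 * (Real.sin (((n:ℝ)+3/2)*x) * Real.sin (((m:ℝ)+3/2)*x)) : ℝ) : ℂ) := by
    intro x hx
    rw [Set.uIcc_of_le Real.pi_pos.le] at hx
    simp only [hF, abs_neg, _root_.abs_of_nonneg hx.1]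
    push_cast
    ring
  rw [intervalIntegral.integral_congr congr1, intervalIntegral.integral_ofReal]
  rw [intervalIntegral.integral_const_mul, key2 n m]
  by_cases h : n = m
  · rw [if_pos h, if_pos h]; push_cast; ring
  · rw [if_neg h, if_neg h]; norm_num
noncomputable section

open MeasureTheory Real Complex AddCircle
open scoped ENNReal

local instance : Fact (0 < 2*π) := ⟨Real.two_pi_pos⟩

/-- the function `θ ↦ sin((n+3/2)|θ|)` as a complex-valued function on `ℝ`. -/
def phiF (n : ℕ) : ℝ → ℂ := fun θ => ((Real.sin (((n:ℝ)+3/2)*|θ|) : ℝ) : ℂ)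

lemma phiF_cont (n : ℕ) : Continuous (phiF n) :=
  Complex.continuous_ofReal.comp
    (Real.continuous_sin.comp (continuous_const.mul _root_.continuous_abs))

lemma phiF_endpoint (n : ℕ) : phiF n (-π) = phiF n (-π + 2*π) := by
  have h1 : -π + 2*π = π := by ring
  rw [h1]
  unfold phiF
  rw [abs_neg]

/-- as a continuous map on the circle of circumference `2π`. -/
def phiC (n : ℕ) : C(AddCircle (2*π), ℂ) :=
  ⟨AddCircle.liftIco (2*π) (-π) (phiF n),
    AddCircle.liftIco_continuous (phiF_endpoint n) (phiF_cont n).continuousOn⟩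

/-- as an element of `L²`. -/
def PhiL (n : ℕ) : Lp ℂ 2 (@haarAddCircle (2*π) _) :=
  ContinuousMap.toLp 2 haarAddCircle ℂ (phiC n)

lemma fourierCoeff_phiC (n : ℕ) (k : ℤ) :
    fourierCoeff (⇑(phiC n)) k = ((fc k n / (2*π) : ℝ) : ℂ) := by
  have h2 : (⇑(phiC n)) = AddCircle.liftIco (2*π) (-π) (phiF n) := rfl
  rw [h2, fourierCoeff_liftIco_eq, fourierCoeffOn_eq_integral]
  have congr1 : ∀ x ∈ Set.uIcc (-π) (-π + 2*π),
      (fourier (-k) (x : AddCircle (-π + 2*π - -π)) • phiF n x)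
        = Complex.exp (-(k:ℂ) * x * Complex.I)
            * ((Real.sin (((n:ℝ)+3/2)*|x|) : ℝ) : ℂ) := by
    intro x _
    rw [fourier_coe_apply, smul_eq_mul]
    congr 1
    have hpi : ((2*π : ℝ) : ℂ) ≠ 0 := by
      simp [Complex.ofReal_ne_zero, Real.pi_ne_zero]
    have harg : 2 * (π:ℂ) * Complex.I * (-k : ℤ) * x / ((-π + 2*π - -π : ℝ) : ℂ)
        = -(k:ℂ) * x * Complex.I := by
      have he : ((-π + 2*π - -π : ℝ) : ℂ) = ((2*π : ℝ) : ℂ) := by norm_num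
      rw [he, div_eq_iff hpi]
      push_cast
      ring
    rw [← harg]
  rw [intervalIntegral.integral_congr congr1]
  have h3 : -π + 2*π = π := by ring
  rw [h3, intC1 k n]
  have h4 : (1/(π - -π) : ℝ) = 1/(2*π) := by ring
  rw [h4, Complex.real_smul]
  push_cast
  ring

lemma fourierCoeff_PhiL (n : ℕ) (k : ℤ) :
    fourierCoeff (⇑(PhiL n)) k = ((fc k n / (2*π) : ℝ) : ℂ) := by
  rw [← fourierCoeff_phiC n k]
  unfold fourierCoeff
  apply MeasureTheory.integral_congr_ae
  filter_upwards [ContinuousMap.coeFn_toLp (p := 2) (μ := haarAddCircle) (𝕜 := ℂ) (phiC n)]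
    with t ht
  rw [PhiL, ht]
def prodF (n m : ℕ) : ℝ → ℂ :=
  fun θ => ((Real.sin (((n:ℝ)+3/2)*|θ|) * Real.sin (((m:ℝ)+3/2)*|θ|) : ℝ) : ℂ)

lemma inner_PhiL (n m : ℕ) :
    (inner ℂ (PhiL n) (PhiL m) : ℂ) = if n = m then (1/2 : ℂ) else 0 := by
  rw [MeasureTheory.L2.inner_def]
  have step1 : ∫ a, (inner ℂ (PhiL n a) (PhiL m a) : ℂ) ∂haarAddCircle
      = ∫ z, AddCircle.liftIco (2*π) (-π) (prodF n m) z ∂haarAddCircle := by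
    apply MeasureTheory.integral_congr_ae
    filter_upwards [ContinuousMap.coeFn_toLp (p := 2) (μ := haarAddCircle) (𝕜 := ℂ) (phiC n),
      ContinuousMap.coeFn_toLp (p := 2) (μ := haarAddCircle) (𝕜 := ℂ) (phiC m)] with t h1 h2
    have e1 : PhiL n t = phiC n t := h1
    have e2 : PhiL m t = phiC m t := h2
    rw [RCLike.inner_apply, e1, e2]
    simp only [phiC, ContinuousMap.coe_mk, AddCircle.liftIco, Function.comp_apply,
      Set.restrict_apply, phiF, prodF, Complex.conj_ofReal, ← Complex.ofReal_mul]
    rw [mul_comm]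
  rw [step1]
  have step2 : ∫ z, AddCircle.liftIco (2*π) (-π) (prodF n m) z ∂haarAddCircle
      = fourierCoeff (AddCircle.liftIco (2*π) (-π) (prodF n m)) 0 := by
    unfold fourierCoeff
    simp [fourier_zero]
  rw [step2, fourierCoeff_liftIco_eq, fourierCoeffOn_eq_integral]
  have congr1 : ∀ x ∈ Set.uIcc (-π) (-π + 2*π),
      (fourier (-(0:ℤ)) (x : AddCircle (-π + 2*π - -π)) • prodF n m x) = prodF n m x := by
    intro x _
    rw [neg_zero, fourier_zero, one_smul]
  rw [intervalIntegral.integral_congr congr1]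
  have h3 : -π + 2*π = π := by ring
  rw [h3]
  have h5 : ∫ x in (-π)..π, prodF n m x = if n = m then ((π : ℝ) : ℂ) else 0 := intC2 n m
  rw [h5]
  have h4 : (1/(π - -π) : ℝ) = 1/(2*π) := by ring
  rw [h4]
  by_cases h : n = m
  · rw [if_pos h, if_pos h, Complex.real_smul]
    have : ((1/(2*π) : ℝ) : ℂ) * ((π:ℝ):ℂ) = ((1/2 : ℝ):ℂ) := by
      rw [← Complex.ofReal_mul]
      field_simp [Real.pi_ne_zero]
    rw [this]
    norm_num
  · rw [if_neg h, if_neg h, smul_zero]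

/-- For every square-summable `x` (here `x n` denotes `x_{n+1}`, `n : ℕ`):
`‖Ax‖² + 2(∑_{n≥1} x_n/(n+1/2))² = π²‖x‖²`. -/
theorem aMat_isometry_identity
    (x : ℕ → ℝ) (hx : Summable fun n : ℕ => (x n) ^ 2) :
    (∑' k : ℕ, (∑' n : ℕ, aMat (k + 1) (n + 1) * x n) ^ 2)
        + 2 * (∑' n : ℕ, x n / ((n : ℝ) + 1 + 1 / 2)) ^ 2
      = Real.pi ^ 2 * ∑' n : ℕ, (x n) ^ 2 := by
  classical
  set e : ℕ → Lp ℂ 2 (@haarAddCircle (2*π) _) := fun n => ((Real.sqrt 2 : ℝ) : ℂ) • PhiL n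
    with he
  have hs2 : ((Real.sqrt 2 : ℝ) : ℂ) * ((Real.sqrt 2 : ℝ) : ℂ) = 2 := by
    rw [← Complex.ofReal_mul, Real.mul_self_sqrt (by norm_num : (0:ℝ) ≤ 2)]
    norm_num
  have horth : Orthonormal ℂ e := by
    rw [orthonormal_iff_ite]
    intro i j
    have h0 : (inner ℂ (e i) (e j) : ℂ)
        = (starRingEnd ℂ) (((Real.sqrt 2 : ℝ) : ℂ))
            * (((Real.sqrt 2 : ℝ) : ℂ) * (if i = j then (1/2:ℂ) else 0)) := by
      rw [he]
      simp only []
      rw [inner_smul_left, inner_smul_right, inner_PhiL]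
    rw [h0, Complex.conj_ofReal]
    by_cases h : i = j
    · rw [if_pos h, if_pos h]
      rw [← mul_assoc, hs2]
      norm_num
    · rw [if_neg h, if_neg h, mul_zero, mul_zero]
  have hsum2 : Summable (fun n => ‖((x n / Real.sqrt 2 : ℝ) : ℂ)‖ ^ 2) := by
    refine (hx.mul_right (1/2)).congr (fun n => ?_)
    rw [Complex.norm_real, Real.norm_eq_abs, _root_.sq_abs, div_pow,
      Real.sq_sqrt (by norm_num : (0:ℝ) ≤ 2)]
    ring
  have hsummable : Summable (fun n => ((x n : ℝ) : ℂ) • PhiL n) := by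
    have h1 := (horth.orthogonalFamily.summable_iff_norm_sq_summable
      (fun n => ((x n / Real.sqrt 2 : ℝ) : ℂ))).2 hsum2
    refine h1.congr (fun n => ?_)
    rw [LinearIsometry.toSpanSingleton_apply, he]
    simp only []
    rw [smul_smul, ← Complex.ofReal_mul,
      div_mul_cancel₀ _ (by positivity : Real.sqrt 2 ≠ 0)]
  set G : Lp ℂ 2 (@haarAddCircle (2*π) _) := ∑' n, ((x n : ℝ) : ℂ) • PhiL n with hGdef
  have hG : HasSum (fun n => ((x n : ℝ) : ℂ) • PhiL n) G := hsummable.hasSum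
  -- coefficients of G
  have hrepr : ∀ k : ℤ,
      HasSum (fun n => ((x n * (fc k n / (2*π)) : ℝ) : ℂ)) (fourierBasis.repr G k) := by
    intro k
    have h1 := hG.mapL (innerSL ℂ (fourierBasis (T := 2*π) k))
    simp only [innerSL_apply_apply] at h1
    have h2 : ∀ n, (inner ℂ ((fourierBasis (T := 2*π)) k) (((x n : ℝ):ℂ) • PhiL n) : ℂ)
        = ((x n * (fc k n / (2*π)) : ℝ) : ℂ) := by
      intro n
      rw [inner_smul_right, ← HilbertBasis.repr_apply_apply, fourierBasis_repr,
        fourierCoeff_PhiL n k, ← Complex.ofReal_mul]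
    simp only [h2] at h1
    rwa [HilbertBasis.repr_apply_apply]
  set ρ : ℤ → ℝ := fun k => (fourierBasis.repr G k).re with hρ
  have hR : ∀ k : ℤ, fourierBasis.repr G k = ((ρ k : ℝ) : ℂ) := by
    intro k
    have him : (fourierBasis.repr G k).im = 0 := by
      have h1 := (hrepr k).mapL Complex.imCLM
      have h0 : HasSum (fun _ : ℕ => (0:ℝ)) ((fourierBasis.repr G k).im) := by
        simpa only [Complex.imCLM_apply, Complex.ofReal_im] using h1
      exact h0.unique hasSum_zero
    exact Complex.ext (by simp [hρ]) (by simp [him])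
  have hHS : ∀ k : ℤ, HasSum (fun n => x n * (fc k n / (2*π))) (ρ k) := by
    intro k
    have h1 := (hrepr k).mapL Complex.reCLM
    simp only [Complex.reCLM_apply, Complex.ofReal_re] at h1
    exact h1
  have hsymmρ : ∀ k : ℤ, ρ (-k) = ρ k := by
    intro k
    have h1 : HasSum (fun n => x n * (fc k n / (2*π))) (ρ (-k)) := by
      simpa only [fc_neg] using hHS (-k)
    exact h1.unique (hHS k)
  -- norm of G
  have hinnPhiG : ∀ n, (inner ℂ (PhiL n) G : ℂ) = ((x n / 2 : ℝ) : ℂ) := by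
    intro n
    have h1 := hG.mapL (innerSL ℂ (PhiL n))
    simp only [innerSL_apply_apply] at h1
    have h2 : ∀ m, (inner ℂ (PhiL n) (((x m : ℝ):ℂ) • PhiL m) : ℂ)
        = if m = n then ((x n / 2 : ℝ):ℂ) else 0 := by
      intro m
      rw [inner_smul_right, inner_PhiL]
      by_cases h : n = m
      · subst h
        rw [if_pos rfl, if_pos rfl]
        push_cast
        ring
      · rw [if_neg h, if_neg (Ne.symm h), mul_zero]
    simp only [h2] at h1
    exact h1.unique (hasSum_ite_eq n _)
  have hGGsum : HasSum (fun n => ((x n ^ 2 / 2 : ℝ) : ℂ)) (inner ℂ G G : ℂ) := by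
    have h1 := hG.mapL (innerSL ℂ G)
    simp only [innerSL_apply_apply] at h1
    have h2 : ∀ n, (inner ℂ G (((x n : ℝ):ℂ) • PhiL n) : ℂ) = ((x n^2/2 : ℝ):ℂ) := by
      intro n
      rw [inner_smul_right, ← inner_conj_symm, hinnPhiG n, Complex.conj_ofReal,
        ← Complex.ofReal_mul]
      norm_num
      ring_nf
    simp only [h2] at h1
    exact h1
  have hnormG : HasSum (fun n => x n ^ 2 / 2) (‖G‖^2) := by
    have h1 := hGGsum.mapL Complex.reCLM
    simp only [Complex.reCLM_apply, Complex.ofReal_re] at h1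
    have h2 : ((inner ℂ G G : ℂ)).re = ‖G‖^2 := by
      have h3 := inner_self_eq_norm_sq (𝕜 := ℂ) G
      rwa [RCLike.re_to_complex] at h3
    rwa [h2] at h1
  -- Parseval
  have hpars : ∑' k : ℤ, ‖fourierBasis.repr G k‖^2 = ‖G‖^2 := by
    have H₁ : ‖fourierBasis.repr G‖ ^ 2 = ∑' i, ‖fourierBasis.repr G i‖ ^ 2 := by
      apply_mod_cast lp.norm_rpow_eq_tsum ?_ (fourierBasis.repr G)
      norm_num
    have H₂ : ‖fourierBasis.repr G‖ ^2 = ‖G‖^2 := by simp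
    rw [← H₁, H₂]
  have hsummP : Summable (fun k : ℤ => ‖fourierBasis.repr G k‖^2) := by
    have h1 := (lp.memℓp (fourierBasis.repr G)).summable
      (by norm_num : 0 < (2:ℝ≥0∞).toReal)
    have h2 : ∀ k : ℤ, ‖fourierBasis.repr G k‖ ^ ((2:ℝ≥0∞).toReal)
        = ‖fourierBasis.repr G k‖^2 := by
      intro k
      rw [show ((2:ℝ≥0∞).toReal) = ((2:ℕ):ℝ) by norm_num, Real.rpow_natCast]
    exact h1.congr h2
  have hnorm_eq : ∀ k : ℤ, ‖fourierBasis.repr G k‖^2 = ρ k ^ 2 := by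
    intro k
    rw [hR k, Complex.norm_real, Real.norm_eq_abs, _root_.sq_abs]
  set P : ℤ → ℝ := fun k => ρ k ^ 2 with hP
  have sP : Summable P := hsummP.congr (fun k => hnorm_eq k)
  have hparsP : ∑' k : ℤ, P k = ‖G‖^2 := by
    rw [← hpars]
    exact tsum_congr (fun k => (hnorm_eq k).symm)
  -- split the ℤ-sum
  have sNat : Summable (fun k : ℕ => P k) :=
    sP.comp_injective (fun a b h => by exact_mod_cast h)
  have sNeg : Summable (fun k : ℕ => P (-((k:ℤ)+1))) :=
    sP.comp_injective (fun a b h => by omega)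
  have hsplit1 : ∑' k : ℕ, (P k + P (-((k:ℤ)+1))) = ∑' k : ℤ, P k :=
    tsum_nat_add_neg_add_one sP
  have hsplit2 : ∑' k : ℕ, (P k + P (-((k:ℤ)+1))) = ∑' k : ℕ, P k + ∑' k : ℕ, P ((k:ℤ)+1) := by
    rw [Summable.tsum_add sNat sNeg]
    congr 1
    refine tsum_congr (fun k => ?_)
    show P (-((k:ℤ)+1)) = P ((k:ℤ)+1)
    rw [hP]
    simp only []
    rw [hsymmρ ((k:ℤ)+1)]
  have hsplit3 : ∑' k : ℕ, P k = P 0 + ∑' k : ℕ, P ((k:ℤ)+1) := by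
    rw [Summable.tsum_eq_zero_add sNat]
    have h0 : P ((0:ℕ):ℤ) = P 0 := by norm_num
    have h1 : (∑' k:ℕ, P ((((k:ℕ)+1 : ℕ)):ℤ)) = ∑' k:ℕ, P ((k:ℤ)+1) :=
      tsum_congr (fun k => by norm_cast)
    rw [h0, h1]
  have sNat1 : Summable (fun k : ℕ => P ((k:ℤ)+1)) :=
    sP.comp_injective (fun a b h => by omega)
  -- statement sums
  have hSk : ∀ k : ℕ, HasSum (fun n => aMat (k + 1) (n + 1) * x n) (2*π*ρ ((k:ℤ)+1)) := by
    intro k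
    have h1 := (hHS ((k:ℤ)+1)).mul_right (2*π)
    have hterm : ∀ n : ℕ, (x n * (fc ((k:ℤ)+1) n / (2*π))) * (2*π)
        = aMat (k + 1) (n + 1) * x n := by
      intro n
      have hfc : fc ((k:ℤ)+1) n = aMat (k+1) (n+1) := by
        unfold fc aMat
        push_cast
        ring_nf
      rw [hfc]
      field_simp
    simp only [hterm] at h1
    rw [mul_comm (2*π)]
    exact h1
  have hV : HasSum (fun n => x n / ((n:ℝ) + 1 + 1/2)) (π * ρ 0) := by
    have h1 := (hHS 0).mul_right π
    have hterm : ∀ n : ℕ, (x n * (fc 0 n / (2*π))) * π = x n / ((n:ℝ) + 1 + 1/2) := by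
      intro n
      have hfc : fc 0 n = 2 / ((n:ℝ) + 1 + 1/2) := by
        unfold fc
        push_cast
        ring_nf
      rw [hfc]
      have hd : ((n:ℝ) + 1 + 1/2) ≠ 0 := by positivity
      field_simp
    simp only [hterm] at h1
    rw [mul_comm π (ρ 0)]
    exact h1
  -- put it together
  have e1 : ∑' k : ℕ, (∑' n : ℕ, aMat (k + 1) (n + 1) * x n) ^ 2
      = 4*π^2 * ∑' k : ℕ, P ((k:ℤ)+1) := by
    rw [← tsum_mul_left]
    refine tsum_congr (fun k => ?_)
    rw [(hSk k).tsum_eq, hP]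
    simp only []
    ring
  have e2 : (∑' n : ℕ, x n / ((n:ℝ) + 1 + 1/2)) ^ 2 = π^2 * P 0 := by
    rw [hV.tsum_eq, hP]
    simp only []
    ring
  have e3 : ∑' n : ℕ, (x n)^2 = 2 * ‖G‖^2 := by
    have h1 := hnormG.mul_right 2
    have : ∀ n : ℕ, x n ^2/2*2 = x n ^2 := fun n => by ring
    simp only [this] at h1
    rw [h1.tsum_eq]
    ring
  rw [e1, e2, e3]
  have e4 : ‖G‖^2 = P 0 + 2 * ∑' k : ℕ, P ((k:ℤ)+1) := by
    rw [← hparsP, ← hsplit1, hsplit2, hsplit3]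
    ring
  rw [e4]
  ring

end
end

section
/- For integers k, n ≥ 1 let a_{k,n} := 1/(n+k+1/2) + 1/(n−k+1/2), and for a square-summable real sequence x define (Ax)_k := ∑_{n=1}^∞ a_{k,n} x_n. If x is a square-summable real sequence satisfying ∑_{n=1}^∞ x_n/(n+1/2) = 0, then ‖Ax‖ = π‖x‖; that is, π^{−1}A restricted to the orthogonal complement in ℓ² of the sequence ((n+1/2)^{−1})_{n≥1} is an isometry. -/
open Filter Finset Real Topology

namespace AMatAux

noncomputable def al (n : ℕ) : ℝ := (n : ℝ) + 3/2

noncomputable def ee (n k : ℕ) : ℝ := 1/((k:ℝ)+1+al n) - 1/((k:ℝ)+1-al n)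

lemma al_pos (n : ℕ) : 0 < al n := by
  simp only [al]; positivity

lemma den1_ne (n k : ℕ) : (k:ℝ)+1+al n ≠ 0 := by
  have := al_pos n; positivity

lemma den2_ne (n k : ℕ) : (k:ℝ)+1-al n ≠ 0 := by
  simp only [al]
  rcases le_or_gt k n with h | h
  · have : (k:ℝ) ≤ n := Nat.cast_le.mpr h
    intro hc; linarith
  · have : (n:ℝ) + 1 ≤ k := by exact_mod_cast Nat.succ_le_of_lt h
    intro hc; linarith

lemma aMat_eq (k n : ℕ) : aMat (k+1) (n+1) = ee n k := by
  simp only [aMat, ee, al]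
  push_cast
  rw [show ((n:ℝ)+1) - ((k:ℝ)+1) + 1/2 = -(((k:ℝ)+1) - ((n:ℝ)+3/2)) by ring,
      show ((n:ℝ)+1) + ((k:ℝ)+1) + 1/2 = ((k:ℝ)+1) + ((n:ℝ)+3/2) by ring]
  rw [div_neg]
  ring

lemma summable_inv_sq (c : ℝ) (hc : ∀ n : ℕ, (n:ℝ)+c ≠ 0) :
    Summable (fun n : ℕ => (1/((n:ℝ)+c))^2) := by
  have h2 : Summable (fun n : ℕ => (1:ℝ)/(n:ℝ)^2) := summable_one_div_nat_pow.mpr one_lt_two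
  refine summable_of_isBigO_nat h2 ?_
  rw [Asymptotics.isBigO_iff]
  refine ⟨4, ?_⟩
  filter_upwards [eventually_ge_atTop (⌈2*|c|⌉₊ + 1)] with n hn
  have hcn : 2*|c| + 1 ≤ (n:ℝ) := by
    have h1 : 2*|c| ≤ (⌈2*|c|⌉₊ : ℝ) := Nat.le_ceil _
    have h2 : ((⌈2*|c|⌉₊ + 1 : ℕ):ℝ) ≤ (n:ℝ) := Nat.cast_le.mpr hn
    push_cast at h2; linarith
  have habs : -|c| ≤ c := neg_abs_le c
  have hpos : (0:ℝ) < (n:ℝ)/2 := by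
    have : (0:ℝ) ≤ |c| := abs_nonneg c
    linarith
  have hhalf : (n:ℝ)/2 ≤ (n:ℝ) + c := by
    have : (0:ℝ) ≤ |c| := abs_nonneg c
    linarith
  have hb : (1/((n:ℝ)+c))^2 ≤ (1/((n:ℝ)/2))^2 := by
    have hp : (0:ℝ) < (n:ℝ)+c := lt_of_lt_of_le hpos hhalf
    apply pow_le_pow_left₀ (one_div_nonneg.mpr hp.le)
    exact one_div_le_one_div_of_le hpos hhalf
  have hn0 : (0:ℝ) < n := by linarith
  rw [Real.norm_eq_abs, Real.norm_eq_abs, abs_of_nonneg (sq_nonneg _),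
      abs_of_nonneg (by positivity : (0:ℝ) ≤ 1/(n:ℝ)^2)]
  calc (1/((n:ℝ)+c))^2 ≤ (1/((n:ℝ)/2))^2 := hb
    _ = 4 * (1/(n:ℝ)^2) := by field_simp; ring

lemma summable_mul_of_sq {a b : ℕ → ℝ} (ha : Summable fun i => (a i)^2)
    (hb : Summable fun i => (b i)^2) : Summable fun i => a i * b i := by
  rw [← summable_abs_iff]
  apply Summable.of_nonneg_of_le (fun i => abs_nonneg _)
    (f := fun i : ℕ => ((a i)^2 + (b i)^2)/2)
  · intro i
    have h1 : |a i * b i| = |a i| * |b i| := abs_mul _ _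
    nlinarith [sq_nonneg (|a i| - |b i|), sq_abs (a i), sq_abs (b i), abs_nonneg (a i),
      abs_nonneg (b i)]
  · exact (ha.add hb).div_const 2

lemma summable_tele (a : ℝ) (h : ∀ k : ℕ, (k:ℝ)+1+a ≠ 0) (d : ℕ) :
    Summable (fun k : ℕ => 1/((k:ℝ)+1+a) - 1/((k:ℝ)+1+a+d)) := by
  have h1 : Summable (fun k : ℕ => (1/((k:ℝ)+(1+a)))^2) := by
    apply summable_inv_sq
    intro n; have := h n; intro hc; apply this; linarith
  have h2 : Summable (fun k : ℕ => (1/((k:ℝ)+(1+a+d)))^2) := by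
    apply summable_inv_sq
    intro n
    have := h (n+d); push_cast at this
    intro hc; apply this; linarith
  rw [← summable_abs_iff]
  apply Summable.of_nonneg_of_le (fun i => abs_nonneg _)
    (f := fun k : ℕ => (d/2) * ((1/((k:ℝ)+(1+a)))^2 + (1/((k:ℝ)+(1+a+d)))^2))
  · intro k
    have hX : (k:ℝ)+1+a ≠ 0 := h k
    have hY : (k:ℝ)+1+a+d ≠ 0 := by
      have := h (k+d); push_cast at this
      intro hc; apply this; linarith
    have hid : 1/((k:ℝ)+1+a) - 1/((k:ℝ)+1+a+d) = d * ((1/((k:ℝ)+1+a)) * (1/((k:ℝ)+1+a+d))) := by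
      field_simp
      ring
    rw [hid, abs_mul, abs_mul]
    have hd0 : |(d:ℝ)| = d := abs_of_nonneg (Nat.cast_nonneg d)
    rw [hd0]
    have key : |1/((k:ℝ)+1+a)| * |1/((k:ℝ)+1+a+d)|
        ≤ ((1/((k:ℝ)+(1+a)))^2 + (1/((k:ℝ)+(1+a+d)))^2)/2 := by
      have e1 : (k:ℝ)+(1+a) = (k:ℝ)+1+a := by ring
      have e2 : (k:ℝ)+(1+a+d) = (k:ℝ)+1+a+d := by ring
      rw [e1, e2]
      nlinarith [sq_nonneg (|1/((k:ℝ)+1+a)| - |1/((k:ℝ)+1+a+d)|),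
        sq_abs (1/((k:ℝ)+1+a)), sq_abs (1/((k:ℝ)+1+a+d))]
    calc (d:ℝ) * (|1/((k:ℝ)+1+a)| * |1/((k:ℝ)+1+a+d)|)
        ≤ (d:ℝ) * (((1/((k:ℝ)+(1+a)))^2 + (1/((k:ℝ)+(1+a+d)))^2)/2) := by
          apply mul_le_mul_of_nonneg_left key (Nat.cast_nonneg d)
      _ = (d/2) * ((1/((k:ℝ)+(1+a)))^2 + (1/((k:ℝ)+(1+a+d)))^2) := by ring
  · exact ((h1.add h2).mul_left _)

lemma sum_range_tele (g : ℕ → ℝ) (K d : ℕ) :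
    ∑ k ∈ Finset.range K, (g k - g (k+d))
      = ∑ j ∈ Finset.range d, g j - ∑ j ∈ Finset.range d, g (K+j) := by
  induction K with
  | zero => simp
  | succ K ih =>
    rw [Finset.sum_range_succ, ih]
    have tele : ∑ j ∈ Finset.range d, (g (K+j) - g (K+(j+1)))
        = g (K+0) - g (K+d) := Finset.sum_range_sub' (fun j => g (K+j)) d
    have h2 : ∑ j ∈ Finset.range d, g (K+1+j) = ∑ j ∈ Finset.range d, g (K+(j+1)) := by
      apply Finset.sum_congr rfl
      intro j _
      congr 1
      omega
    rw [h2]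
    rw [Finset.sum_sub_distrib] at tele
    have h3 : ∑ j ∈ Finset.range d, g (K+(j+1))
        = ∑ j ∈ Finset.range d, g (K+j) - (g (K+0) - g (K+d)) := by
      linarith [tele]
    rw [h3]
    simp only [Nat.add_zero]
    ring

lemma tsum_tele (a : ℝ) (h : ∀ k : ℕ, (k:ℝ)+1+a ≠ 0) (d : ℕ) :
    ∑' k : ℕ, (1/((k:ℝ)+1+a) - 1/((k:ℝ)+1+a+d)) = ∑ j ∈ Finset.range d, 1/((j:ℝ)+1+a) := by
  have hs := summable_tele a h d
  have ht := hs.hasSum.tendsto_sum_nat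
  set g : ℕ → ℝ := fun k => 1/((k:ℝ)+1+a) with hg
  have hcongr : ∀ k : ℕ, 1/((k:ℝ)+1+a) - 1/((k:ℝ)+1+a+d) = g k - g (k+d) := by
    intro k
    simp only [hg]
    push_cast
    ring_nf
  have key : ∀ K : ℕ, ∑ k ∈ Finset.range K, (1/((k:ℝ)+1+a) - 1/((k:ℝ)+1+a+d))
      = ∑ j ∈ Finset.range d, g j - ∑ j ∈ Finset.range d, g (K+j) := by
    intro K
    rw [Finset.sum_congr rfl (fun k _ => hcongr k)]
    exact sum_range_tele g K d
  have hlim : Tendsto (fun K : ℕ => ∑ j ∈ Finset.range d, g (K+j)) atTop (𝓝 0) := by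
    have base : ∀ j : ℕ, Tendsto (fun K : ℕ => g (K+j)) atTop (𝓝 0) := by
      intro j
      simp only [hg, one_div]
      have : Tendsto (fun K : ℕ => ((K+j : ℕ):ℝ)+1+a) atTop atTop := by
        apply tendsto_atTop_add_const_right
        apply tendsto_atTop_add_const_right
        exact (tendsto_natCast_atTop_atTop : Tendsto (fun n : ℕ => (n:ℝ)) atTop atTop).comp (tendsto_add_atTop_nat j)
      exact this.inv_tendsto_atTop
    have := tendsto_finset_sum (Finset.range d) (fun j (_ : j ∈ Finset.range d) => base j)
    simpa using this
  have ht2 : Tendsto (fun K : ℕ => ∑ k ∈ Finset.range K, (1/((k:ℝ)+1+a) - 1/((k:ℝ)+1+a+d)))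
      atTop (𝓝 (∑ j ∈ Finset.range d, g j)) := by
    simp only [key]
    simpa using (tendsto_const_nhds (x := ∑ j ∈ Finset.range d, g j)
      (f := atTop (α := ℕ))).sub hlim
  exact tendsto_nhds_unique ht ht2

noncomputable def q (j : ℕ) : ℝ := (1/((j:ℝ)+1/2))^2

lemma hasSum_P : HasSum q (π^2/2) := by
  have h := hasSum_zeta_two
  have heven : HasSum (fun k : ℕ => (1:ℝ)/((2*k : ℕ):ℝ)^2) (π^2/24) := by
    have h4 := h.mul_left (1/4)
    have heq : (fun k : ℕ => (1/4) * ((1:ℝ)/(k:ℝ)^2)) = fun k : ℕ => (1:ℝ)/((2*k : ℕ):ℝ)^2 := by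
      funext k
      push_cast
      rcases eq_or_ne (k:ℝ) 0 with h0 | h0
      · simp [h0]
      · field_simp; ring
    rw [heq] at h4
    rw [show π^2/24 = (1/4)*(π^2/6) by ring]
    exact h4
  have hodd_sm : Summable (fun k : ℕ => (1:ℝ)/((2*k+1 : ℕ):ℝ)^2) := by
    have hinj : Function.Injective (fun k : ℕ => 2*k+1) := by
      intro a b hab
      simp only [] at hab
      omega
    exact h.summable.comp_injective hinj
  obtain ⟨L, hodd⟩ := hodd_sm
  have htot : HasSum (fun n : ℕ => (1:ℝ)/(n:ℝ)^2) (π^2/24 + L) :=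
    HasSum.even_add_odd (f := fun n : ℕ => (1:ℝ)/(n:ℝ)^2) heven hodd
  have hL : L = π^2/8 := by
    have := htot.unique h
    linarith
  rw [hL] at hodd
  have h4 := hodd.mul_left 4
  have heq : (fun k : ℕ => (4:ℝ) * ((1:ℝ)/((2*k+1 : ℕ):ℝ)^2)) = q := by
    funext j
    simp only [q]
    push_cast
    have h1 : (2*(j:ℝ)+1) ≠ 0 := by positivity
    have h2 : ((j:ℝ)+1/2) ≠ 0 := by positivity
    field_simp
    ring
  rw [heq] at h4
  rw [show π^2/2 = 4*(π^2/8) by ring]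
  exact h4

lemma summable_q : Summable q := hasSum_P.summable
lemma tsum_q : ∑' j, q j = π^2/2 := hasSum_P.tsum_eq



lemma summable_sq1 (n : ℕ) : Summable (fun k : ℕ => (1/((k:ℝ)+1+al n))^2) := by
  have h := summable_inv_sq (1+al n) (fun k => by have := den1_ne n k; intro hc; apply this; linarith)
  exact h.congr (fun k => by rw [← add_assoc])

lemma summable_sq2 (n : ℕ) : Summable (fun k : ℕ => (1/((k:ℝ)+1-al n))^2) := by
  have h := summable_inv_sq (1-al n) (fun k => by have := den2_ne n k; intro hc; apply this; linarith)
  exact h.congr (fun k => by rw [show (k:ℝ)+(1-al n) = (k:ℝ)+1-al n by ring])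

lemma summable_ee_sq (n : ℕ) : Summable (fun k : ℕ => (ee n k)^2) := by
  apply Summable.of_nonneg_of_le (fun k => sq_nonneg _)
    (f := fun k : ℕ => 2*((1/((k:ℝ)+1+al n))^2 + (1/((k:ℝ)+1-al n))^2))
  · intro k
    simp only [ee]
    nlinarith [sq_nonneg (1/((k:ℝ)+1+al n) + 1/((k:ℝ)+1-al n))]
  · exact ((summable_sq1 n).add (summable_sq2 n)).mul_left 2

lemma FC1 (n : ℕ) : ∑ j ∈ Finset.range (2*n+3), 1/((j:ℝ)+1+(-al n)) = 1/al n := by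
  rw [Finset.sum_range_succ]
  have hlast : 1/(((2*n+2 : ℕ):ℝ)+1+(-al n)) = 1/al n := by
    congr 1
    push_cast [al]
    ring
  have hS : ∑ j ∈ Finset.range (2*n+2), 1/((j:ℝ)+1+(-al n)) = 0 := by
    have hrefl := Finset.sum_range_reflect (fun j : ℕ => 1/((j:ℝ)+1+(-al n))) (2*n+2)
    have hterm : ∀ j ∈ Finset.range (2*n+2),
        1/(((2*n+2-1-j : ℕ):ℝ)+1+(-al n)) = -(1/((j:ℝ)+1+(-al n))) := by
      intro j hj
      rw [Finset.mem_range] at hj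
      have hcast : ((2*n+2-1-j : ℕ):ℝ) = 2*(n:ℝ)+1-(j:ℝ) := by
        have h1 : 2*n+2-1-j = 2*n+1-j := by omega
        rw [h1, Nat.cast_sub (by omega)]
        push_cast; ring
      rw [hcast, show 2*(n:ℝ)+1-(j:ℝ)+1+(-al n) = -((j:ℝ)+1+(-al n)) by simp [al]; ring, div_neg]
    have h2 : ∑ j ∈ Finset.range (2*n+2), 1/(((2*n+2-1-j : ℕ):ℝ)+1+(-al n))
        = -∑ j ∈ Finset.range (2*n+2), 1/((j:ℝ)+1+(-al n)) := by
      rw [Finset.sum_congr rfl hterm, Finset.sum_neg_distrib]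
    linarith [hrefl, h2]
  rw [hS, hlast, zero_add]

lemma tsum_ee_sq (n : ℕ) : ∑' k, (ee n k)^2 = π^2 - 2/(al n)^2 := by
  have hα := al_pos n
  have hne : ∀ k : ℕ, (k:ℝ)+1+(-al n) ≠ 0 := fun k => by
    have := den2_ne n k; intro hc; apply this; linarith
  have hd : ((2*n+3 : ℕ):ℝ) = 2*al n := by push_cast [al]; ring
  have hpt : ∀ k : ℕ, (ee n k)^2 = ((1/((k:ℝ)+1+al n))^2 + (1/((k:ℝ)+1-al n))^2)
      - (1/al n) * (1/((k:ℝ)+1+(-al n)) - 1/((k:ℝ)+1+(-al n)+((2*n+3 : ℕ):ℝ))) := by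
    intro k
    have h1 := den1_ne n k
    have h2 := den2_ne n k
    rw [hd, show (k:ℝ)+1+(-al n) = (k:ℝ)+1-al n by ring,
        show (k:ℝ)+1-al n+2*al n = (k:ℝ)+1+al n by ring]
    simp only [ee]
    field_simp
    ring
  have hs1 := summable_sq1 n
  have hs2 := summable_sq2 n
  have hst := summable_tele (-al n) hne (2*n+3)
  rw [tsum_congr hpt, Summable.tsum_sub (hs1.add hs2) (hst.mul_left (1/al n)), Summable.tsum_add hs1 hs2,
      tsum_mul_left, tsum_tele (-al n) hne (2*n+3), FC1 n]
  have e1 : ∑' k : ℕ, (1/((k:ℝ)+1+al n))^2 = π^2/2 - ∑ j ∈ Finset.range (n+2), q j := by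
    have hshift : ∀ k : ℕ, (1/((k:ℝ)+1+al n))^2 = q (k+(n+2)) := by
      intro k
      simp only [q]
      rw [show ((k+(n+2) : ℕ):ℝ)+1/2 = (k:ℝ)+1+al n by push_cast [al]; ring]
    rw [tsum_congr hshift]
    have hsplit := Summable.sum_add_tsum_nat_add (f := q) (n+2) summable_q
    rw [tsum_q] at hsplit
    have : ∑ j ∈ Finset.range (n+2), q j + ∑' k : ℕ, q (k+(n+2)) = π^2/2 := hsplit
    linarith
  have e2 : ∑' k : ℕ, (1/((k:ℝ)+1-al n))^2 = π^2/2 + ∑ j ∈ Finset.range (n+1), q j := by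
    have hsplit := Summable.sum_add_tsum_nat_add (f := fun k : ℕ => (1/((k:ℝ)+1-al n))^2) (n+1) hs2
    have htail : ∀ k : ℕ, (1/(((k+(n+1) : ℕ):ℝ)+1-al n))^2 = q k := by
      intro k
      simp only [q]
      rw [show ((k+(n+1) : ℕ):ℝ)+1-al n = (k:ℝ)+1/2 by push_cast [al]; ring]
    have hfin : ∑ k ∈ Finset.range (n+1), (1/((k:ℝ)+1-al n))^2
        = ∑ j ∈ Finset.range (n+1), q j := by
      have hrefl := Finset.sum_range_reflect q (n+1)
      have hterm : ∀ k ∈ Finset.range (n+1), q (n+1-1-k) = (1/((k:ℝ)+1-al n))^2 := by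
        intro k hk
        rw [Finset.mem_range] at hk
        simp only [q]
        have h1 : n+1-1-k = n-k := by omega
        rw [h1, show ((n-k : ℕ):ℝ) = (n:ℝ)-(k:ℝ) from by rw [Nat.cast_sub (by omega)]]
        rw [show (n:ℝ)-(k:ℝ)+1/2 = -((k:ℝ)+1-al n) by simp [al]; ring]
        rw [div_neg, neg_sq]
      calc ∑ k ∈ Finset.range (n+1), (1/((k:ℝ)+1-al n))^2
          = ∑ k ∈ Finset.range (n+1), q (n+1-1-k) :=
            (Finset.sum_congr rfl hterm).symm
        _ = ∑ j ∈ Finset.range (n+1), q j := hrefl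
    have htail2 : ∑' k : ℕ, (1/(((k+(n+1) : ℕ):ℝ)+1-al n))^2 = π^2/2 := by
      rw [tsum_congr htail, tsum_q]
    rw [← hsplit, hfin]
    push_cast at htail2 ⊢
    rw [htail2]
    ring
  rw [e1, e2, Finset.sum_range_succ]
  have hq : q (n+1) = 1/(al n)^2 := by
    simp only [q]
    rw [show ((n+1 : ℕ):ℝ)+1/2 = al n by push_cast [al]; ring, div_pow, one_pow]
  rw [hq]
  field_simp
  ring


lemma FC2 (m n : ℕ) (h : m < n) :
    ∑ j ∈ Finset.range (n-m), 1/((j:ℝ)+1+al m)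
      + ∑ j ∈ Finset.range (n-m), 1/((j:ℝ)+1+(-al n))
      = 1/al n - 1/al m := by
  have h2 : ∑ j ∈ Finset.range (n-m), 1/((j:ℝ)+1+(-al n))
      = -∑ j ∈ Finset.range (n-m), 1/((j:ℝ)+al m) := by
    have hrefl := Finset.sum_range_reflect (fun j : ℕ => 1/((j:ℝ)+1+(-al n))) (n-m)
    have hterm : ∀ j ∈ Finset.range (n-m),
        1/(((n-m-1-j : ℕ):ℝ)+1+(-al n)) = -(1/((j:ℝ)+al m)) := by
      intro j hj
      rw [Finset.mem_range] at hj
      have hcast : ((n-m-1-j : ℕ):ℝ) = (n:ℝ)-(m:ℝ)-1-(j:ℝ) := by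
        have h1 : n-m-1-j = n-(m+1+j) := by omega
        rw [h1, Nat.cast_sub (by omega)]
        push_cast; ring
      rw [hcast, show (n:ℝ)-(m:ℝ)-1-(j:ℝ)+1+(-al n) = -((j:ℝ)+al m) by simp [al]; ring, div_neg]
    rw [← hrefl, Finset.sum_congr rfl hterm, Finset.sum_neg_distrib]
  rw [h2]
  have hsub := Finset.sum_range_sub (fun j : ℕ => 1/((j:ℝ)+al m)) (n-m)
  rw [Finset.sum_sub_distrib] at hsub
  have e : ∀ j ∈ Finset.range (n-m), 1/(((j+1 : ℕ):ℝ)+al m) = 1/((j:ℝ)+1+al m) := by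
    intro j _
    congr 1
    push_cast; ring
  rw [Finset.sum_congr rfl e] at hsub
  have hcast2 : ((n-m : ℕ):ℝ)+al m = al n := by
    rw [Nat.cast_sub h.le]; simp [al]; ring
  rw [hcast2] at hsub
  simp only [Nat.cast_zero, zero_add] at hsub
  linarith

lemma FC3 (m n : ℕ) :
    ∑ j ∈ Finset.range (m+n+3), 1/((j:ℝ)+1+(-al n))
      + ∑ j ∈ Finset.range (m+n+3), 1/((j:ℝ)+1+(-al m))
      = 1/al m + 1/al n := by
  have h2 : ∑ j ∈ Finset.range (m+n+3), 1/((j:ℝ)+1+(-al m))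
      = -∑ j ∈ Finset.range (m+n+3), 1/((j:ℝ)-al n) := by
    have hrefl := Finset.sum_range_reflect (fun j : ℕ => 1/((j:ℝ)+1+(-al m))) (m+n+3)
    have hterm : ∀ j ∈ Finset.range (m+n+3),
        1/(((m+n+3-1-j : ℕ):ℝ)+1+(-al m)) = -(1/((j:ℝ)-al n)) := by
      intro j hj
      rw [Finset.mem_range] at hj
      have hcast : ((m+n+3-1-j : ℕ):ℝ) = (m:ℝ)+(n:ℝ)+2-(j:ℝ) := by
        have h1 : m+n+3-1-j = (m+n+2)-j := by omega
        rw [h1, Nat.cast_sub (by omega)]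
        push_cast; ring
      rw [hcast, show (m:ℝ)+(n:ℝ)+2-(j:ℝ)+1+(-al m) = -((j:ℝ)-al n) by simp [al]; ring, div_neg]
    rw [← hrefl, Finset.sum_congr rfl hterm, Finset.sum_neg_distrib]
  rw [h2]
  have hsub := Finset.sum_range_sub (fun j : ℕ => 1/((j:ℝ)-al n)) (m+n+3)
  rw [Finset.sum_sub_distrib] at hsub
  have e : ∀ j ∈ Finset.range (m+n+3), 1/(((j+1 : ℕ):ℝ)-al n) = 1/((j:ℝ)+1+(-al n)) := by
    intro j _
    congr 1
    push_cast; ring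
  rw [Finset.sum_congr rfl e] at hsub
  have hc1 : 1/(((m+n+3 : ℕ):ℝ)-al n) = 1/al m := by
    congr 1; push_cast [al]; ring
  have hc2 : 1/(((0 : ℕ):ℝ)-al n) = -(1/al n) := by
    rw [show ((0:ℕ):ℝ)-al n = -(al n) by simp, div_neg]
  rw [hc1, hc2] at hsub
  linarith

lemma summable_ee_mul (m n : ℕ) : Summable fun k => ee m k * ee n k :=
  summable_mul_of_sq (summable_ee_sq m) (summable_ee_sq n)

lemma tsum_ee_mul_lt (m n : ℕ) (hmn : m < n) :
    ∑' k, ee m k * ee n k = -2/(al m * al n) := by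
  have hαm := al_pos m
  have hαn := al_pos n
  have hnem : ∀ k : ℕ, (k:ℝ)+1+(-al m) ≠ 0 := fun k => by
    have := den2_ne m k; intro hc; apply this; linarith
  have hnen : ∀ k : ℕ, (k:ℝ)+1+(-al n) ≠ 0 := fun k => by
    have := den2_ne n k; intro hc; apply this; linarith
  have hnm : ((n-m : ℕ):ℝ) = al n - al m := by
    rw [Nat.cast_sub hmn.le]; simp [al]
  have hmn3 : ((m+n+3 : ℕ):ℝ) = al m + al n := by push_cast [al]; ring
  have hlt : al m < al n := by
    have : (m:ℝ) < n := Nat.cast_lt.mpr hmn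
    simp only [al]; linarith
  have hba : al n - al m ≠ 0 := (sub_pos.mpr hlt).ne'
  have hab : al m + al n ≠ 0 := by positivity
  have hpt : ∀ k : ℕ, ee m k * ee n k
      = (1/(al n - al m)) * ((1/((k:ℝ)+1+al m) - 1/((k:ℝ)+1+al m+((n-m:ℕ):ℝ)))
          + (1/((k:ℝ)+1+(-al n)) - 1/((k:ℝ)+1+(-al n)+((n-m:ℕ):ℝ))))
        - (1/(al m + al n)) * ((1/((k:ℝ)+1+(-al n)) - 1/((k:ℝ)+1+(-al n)+((m+n+3:ℕ):ℝ)))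
          + (1/((k:ℝ)+1+(-al m)) - 1/((k:ℝ)+1+(-al m)+((m+n+3:ℕ):ℝ)))) := by
    intro k
    have h1m := den1_ne m k
    have h2m := den2_ne m k
    have h1n := den1_ne n k
    have h2n := den2_ne n k
    rw [hnm, hmn3,
        show (k:ℝ)+1+al m+(al n - al m) = (k:ℝ)+1+al n by ring,
        show (k:ℝ)+1+(-al n)+(al n - al m) = (k:ℝ)+1-al m by ring,
        show (k:ℝ)+1+(-al n)+(al m + al n) = (k:ℝ)+1+al m by ring,
        show (k:ℝ)+1+(-al m)+(al m + al n) = (k:ℝ)+1+al n by ring,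
        show (k:ℝ)+1+(-al n) = (k:ℝ)+1-al n by ring,
        show (k:ℝ)+1+(-al m) = (k:ℝ)+1-al m by ring]
    simp only [ee]
    field_simp
    ring
  have t1 := summable_tele (al m) (fun k => den1_ne m k) (n-m)
  have t2 := summable_tele (-al n) hnen (n-m)
  have t3 := summable_tele (-al n) hnen (m+n+3)
  have t4 := summable_tele (-al m) hnem (m+n+3)
  rw [tsum_congr hpt, Summable.tsum_sub ((t1.add t2).mul_left _) ((t3.add t4).mul_left _),
      tsum_mul_left, tsum_mul_left, Summable.tsum_add t1 t2, Summable.tsum_add t3 t4,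
      tsum_tele (al m) (fun k => den1_ne m k) (n-m), tsum_tele (-al n) hnen (n-m),
      tsum_tele (-al n) hnen (m+n+3), tsum_tele (-al m) hnem (m+n+3)]
  rw [FC2 m n hmn, FC3 m n]
  field_simp
  ring

lemma tsum_ee_mul (m n : ℕ) :
    ∑' k, ee m k * ee n k = (if m = n then π^2 else 0) - 2/(al m * al n) := by
  rcases lt_trichotomy m n with h | h | h
  · rw [if_neg h.ne, tsum_ee_mul_lt m n h]; ring
  · subst h
    rw [if_pos rfl]
    have hsq : ∑' k, ee m k * ee m k = ∑' k, (ee m k)^2 :=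
      tsum_congr fun k => (sq (ee m k)).symm
    rw [hsq, tsum_ee_sq m]
    have := (al_pos m).ne'
    field_simp
  · rw [if_neg (ne_of_gt h)]
    have hcomm : ∑' k, ee m k * ee n k = ∑' k, ee n k * ee m k :=
      tsum_congr fun k => mul_comm _ _
    rw [hcomm, tsum_ee_mul_lt n m h, mul_comm (al m) (al n)]
    ring

lemma summable_ee_sq_n (k : ℕ) : Summable (fun n : ℕ => (ee n k)^2) := by
  have c1 : Summable (fun n : ℕ => (1/((n:ℝ)+((k:ℝ)+5/2)))^2) :=
    summable_inv_sq _ (fun n => by positivity)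
  have c2 : Summable (fun n : ℕ => (1/((n:ℝ)+(1/2-(k:ℝ))))^2) := by
    apply summable_inv_sq
    intro n
    have h := den2_ne n k
    simp only [al] at h
    intro hc; apply h; linarith
  have he : ∀ n : ℕ, ee n k = 1/((n:ℝ)+((k:ℝ)+5/2)) + 1/((n:ℝ)+(1/2-(k:ℝ))) := by
    intro n
    simp only [ee, al]
    rw [show (k:ℝ)+1+((n:ℝ)+3/2) = (n:ℝ)+((k:ℝ)+5/2) by ring,
        show (k:ℝ)+1-((n:ℝ)+3/2) = -((n:ℝ)+(1/2-(k:ℝ))) by ring, div_neg]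
    ring
  apply Summable.of_nonneg_of_le (fun n => sq_nonneg _)
    (f := fun n : ℕ => 2*((1/((n:ℝ)+((k:ℝ)+5/2)))^2 + (1/((n:ℝ)+(1/2-(k:ℝ))))^2))
  · intro n
    rw [he n]
    nlinarith [sq_nonneg (1/((n:ℝ)+((k:ℝ)+5/2)) - 1/((n:ℝ)+(1/2-(k:ℝ))))]
  · exact (c1.add c2).mul_left 2

lemma summable_row (x : ℕ → ℝ) (hx : Summable fun n : ℕ => (x n)^2) (k : ℕ) :
    Summable (fun n : ℕ => ee n k * x n) :=
  summable_mul_of_sq (summable_ee_sq_n k) hx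

lemma key_fin (x : ℕ → ℝ) (s : Finset ℕ) :
    Summable (fun k : ℕ => (∑ n ∈ s, ee n k * x n)^2) ∧
    ∑' k : ℕ, (∑ n ∈ s, ee n k * x n)^2
      = π^2 * (∑ n ∈ s, (x n)^2) - 2*(∑ n ∈ s, x n / al n)^2 := by
  have hsq : ∀ k : ℕ, (∑ n ∈ s, ee n k * x n)^2
      = ∑ m ∈ s, ∑ n ∈ s, (x m * x n) * (ee m k * ee n k) := by
    intro k
    rw [sq, Finset.sum_mul_sum]
    exact Finset.sum_congr rfl fun m _ => Finset.sum_congr rfl fun n _ => by ring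
  have hsm : ∀ m n : ℕ, Summable (fun k => (x m * x n) * (ee m k * ee n k)) :=
    fun m n => (summable_ee_mul m n).mul_left _
  constructor
  · apply Summable.congr ?_ (fun k => (hsq k).symm)
    exact summable_sum (fun m _ => summable_sum (fun n _ => hsm m n))
  · rw [tsum_congr hsq,
      Summable.tsum_finsetSum (fun m _ => summable_sum (fun n _ => hsm m n))]
    have h1 : ∀ m ∈ s, ∑' k, ∑ n ∈ s, (x m * x n) * (ee m k * ee n k)
        = ∑ n ∈ s, ((x m * x n) * ((if m = n then π^2 else 0) - 2/(al m * al n))) := by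
      intro m _
      rw [Summable.tsum_finsetSum (fun n _ => hsm m n)]
      exact Finset.sum_congr rfl fun n _ => by rw [tsum_mul_left, tsum_ee_mul m n]
    rw [Finset.sum_congr rfl h1]
    have expand : ∀ m ∈ s, ∑ n ∈ s, ((x m * x n) * ((if m = n then π^2 else 0) - 2/(al m * al n)))
        = (∑ n ∈ s, (if m = n then π^2 * (x m * x n) else 0))
          - ∑ n ∈ s, 2*((x m/al m) * (x n/al n)) := by
      intro m _
      rw [← Finset.sum_sub_distrib]
      apply Finset.sum_congr rfl
      intro n _
      have hm0 : al m ≠ 0 := (al_pos m).ne'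
      have hn0 : al n ≠ 0 := (al_pos n).ne'
      rcases eq_or_ne m n with h | h
      · subst h; simp only [if_pos rfl, eq_self_iff_true, if_true]; field_simp
      · simp only [if_neg h]; field_simp; ring
    rw [Finset.sum_congr rfl expand, Finset.sum_sub_distrib]
    have hdiag : ∑ m ∈ s, ∑ n ∈ s, (if m = n then π^2 * (x m * x n) else 0)
        = π^2 * ∑ n ∈ s, (x n)^2 := by
      rw [Finset.mul_sum]
      apply Finset.sum_congr rfl
      intro m hm
      rw [Finset.sum_ite_eq s m (fun n => π^2 * (x m * x n)), if_pos hm]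
      ring
    have hoff : ∑ m ∈ s, ∑ n ∈ s, 2*((x m/al m) * (x n/al n))
        = 2*(∑ n ∈ s, x n / al n)^2 := by
      calc ∑ m ∈ s, ∑ n ∈ s, 2*((x m/al m) * (x n/al n))
          = 2 * ∑ m ∈ s, ∑ n ∈ s, (x m/al m) * (x n/al n) := by
            rw [Finset.mul_sum]
            exact Finset.sum_congr rfl fun m _ => by rw [Finset.mul_sum]
        _ = 2 * ((∑ n ∈ s, x n/al n) * (∑ n ∈ s, x n/al n)) := by
            rw [← Finset.sum_mul_sum]
        _ = 2*(∑ n ∈ s, x n / al n)^2 := by ring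
    rw [hdiag, hoff]

lemma summable_sq_add {a b : ℕ → ℝ} (ha : Summable fun k => (a k)^2)
    (hb : Summable fun k => (b k)^2) : Summable (fun k => (a k + b k)^2) := by
  apply Summable.of_nonneg_of_le (fun k => sq_nonneg _)
    (f := fun k => 2*((a k)^2+(b k)^2))
  · intro k; nlinarith [sq_nonneg (a k - b k)]
  · exact (ha.add hb).mul_left 2

lemma minkowski {a b : ℕ → ℝ} (ha : Summable fun k => (a k)^2)
    (hb : Summable fun k => (b k)^2) :
    Real.sqrt (∑' k, (a k + b k)^2)
      ≤ Real.sqrt (∑' k, (a k)^2) + Real.sqrt (∑' k, (b k)^2) := by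
  set A := ∑' k, (a k)^2 with hA
  set B := ∑' k, (b k)^2 with hB
  have hA0 : 0 ≤ A := tsum_nonneg (fun k => sq_nonneg _)
  have hB0 : 0 ≤ B := tsum_nonneg (fun k => sq_nonneg _)
  have hbound : ∑' k, (a k + b k)^2 ≤ (Real.sqrt A + Real.sqrt B)^2 := by
    apply Summable.tsum_le_of_sum_le (summable_sq_add ha hb)
    intro s
    have hCS := Finset.sum_mul_sq_le_sq_mul_sq s a b
    have hsa : ∑ k ∈ s, (a k)^2 ≤ A := Summable.sum_le_tsum s (fun k _ => sq_nonneg _) ha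
    have hsb : ∑ k ∈ s, (b k)^2 ≤ B := Summable.sum_le_tsum s (fun k _ => sq_nonneg _) hb
    have hab : ∑ k ∈ s, a k * b k ≤ Real.sqrt A * Real.sqrt B := by
      have h1 : ∑ k ∈ s, a k * b k
          ≤ Real.sqrt ((∑ k ∈ s, (a k)^2) * (∑ k ∈ s, (b k)^2)) :=
        calc ∑ k ∈ s, a k * b k ≤ |∑ k ∈ s, a k * b k| := le_abs_self _
          _ = Real.sqrt ((∑ k ∈ s, a k * b k)^2) := (Real.sqrt_sq_eq_abs _).symm
          _ ≤ Real.sqrt ((∑ k ∈ s, (a k)^2) * (∑ k ∈ s, (b k)^2)) := Real.sqrt_le_sqrt hCS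
      have h2 : Real.sqrt ((∑ k ∈ s, (a k)^2) * (∑ k ∈ s, (b k)^2))
          ≤ Real.sqrt A * Real.sqrt B := by
        rw [← Real.sqrt_mul hA0]
        apply Real.sqrt_le_sqrt
        exact mul_le_mul hsa hsb (Finset.sum_nonneg fun k _ => sq_nonneg _) hA0
      linarith
    have expand : ∑ k ∈ s, (a k + b k)^2
        = ∑ k ∈ s, (a k)^2 + 2*∑ k ∈ s, a k * b k + ∑ k ∈ s, (b k)^2 := by
      have hterm : ∀ k ∈ s, (a k + b k)^2 = (a k)^2 + 2*(a k * b k) + (b k)^2 :=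
        fun k _ => by ring
      rw [Finset.sum_congr rfl hterm, Finset.sum_add_distrib, Finset.sum_add_distrib,
        ← Finset.mul_sum]
    rw [expand]
    nlinarith [Real.sq_sqrt hA0, Real.sq_sqrt hB0, Real.sqrt_nonneg A, Real.sqrt_nonneg B]
  calc Real.sqrt (∑' k, (a k + b k)^2)
      ≤ Real.sqrt ((Real.sqrt A + Real.sqrt B)^2) := Real.sqrt_le_sqrt hbound
    _ = Real.sqrt A + Real.sqrt B := Real.sqrt_sq (by positivity)

end AMatAux

open AMatAux

set_option maxHeartbeats 1000000 in
/-- `π⁻¹A` restricted to the orthogonal complement of `((n+1/2)⁻¹)_{n≥1}` is an isometry: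
if `x` is square-summable (here `x n` denotes `x_{n+1}`, `n : ℕ`) and
`∑_{n≥1} x_n/(n+1/2) = 0`, then `‖Ax‖ = π‖x‖`. -/
theorem aMat_isometry_on_orthocomplement
    (x : ℕ → ℝ) (hx : Summable fun n : ℕ => (x n) ^ 2)
    (hx0 : (∑' n : ℕ, x n / ((n : ℝ) + 1 + 1 / 2)) = 0) :
    Real.sqrt (∑' k : ℕ, (∑' n : ℕ, aMat (k + 1) (n + 1) * x n) ^ 2)
      = Real.pi * Real.sqrt (∑' n : ℕ, (x n) ^ 2) := by
  have hstmt : (fun k : ℕ => (∑' n : ℕ, aMat (k+1) (n+1) * x n)^2) = fun k => ((∑' n, ee n k * x n))^2 := by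
    funext k
    congr 1
    exact tsum_congr fun n => by rw [aMat_eq k n]
  rw [hstmt]
  have hrow : ∀ k, Summable (fun n : ℕ => ee n k * x n) := fun k => summable_row x hx k
  have hdecomp : ∀ N k, (∑' n, ee n k * x n) = (∑ n ∈ Finset.range N, ee n k * x n) + (∑' n, ee (n+N) k * x (n+N)) :=
    fun N k => (Summable.sum_add_tsum_nat_add (f := fun n => ee n k * x n) N (hrow k)).symm
  have hYs : ∀ N : ℕ, Summable fun k => (∑ n ∈ Finset.range N, ee n k * x n)^2 := fun N => (key_fin x (Finset.range N)).1
  have hYv : ∀ N, ∑' k, ((∑ n ∈ Finset.range N, ee n k * x n))^2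
      = π^2 * (∑ n ∈ Finset.range N, (x n)^2) - 2*(∑ n ∈ Finset.range N, x n / al n)^2 :=
    fun N => (key_fin x (Finset.range N)).2
  have hxshift : ∀ N, Summable fun n => (x (n+N))^2 := fun N => (summable_nat_add_iff (f := fun n => (x n)^2) N).2 hx
  have hRbound : ∀ N, Summable (fun k => ((∑' n, ee (n+N) k * x (n+N)))^2) ∧ ∑' k, ((∑' n, ee (n+N) k * x (n+N)))^2 ≤ π^2 * (∑' n, (x (n+N))^2) := by
    intro N
    have hpartial : ∀ (K : Finset ℕ), ∑ k ∈ K, ((∑' n, ee (n+N) k * x (n+N)))^2 ≤ π^2 * (∑' n, (x (n+N))^2) := by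
      intro K
      have hptM : ∀ M : ℕ,
          ∑ k ∈ K, (∑ n ∈ Finset.range M, ee (n+N) k * x (n+N))^2 ≤ π^2 * (∑' n, (x (n+N))^2) := by
        intro M
        set s : Finset ℕ := (Finset.range M).map ⟨fun n => n + N, add_left_injective N⟩ with hs
        have hmap : ∀ k, ∑ n ∈ Finset.range M, ee (n+N) k * x (n+N) = ∑ n ∈ s, ee n k * x n := by
          intro k
          rw [hs, Finset.sum_map]
          simp only [Function.Embedding.coeFn_mk]
        have h1 := key_fin x s
        have h2 : ∑ k ∈ K, (∑ n ∈ s, ee n k * x n)^2 ≤ ∑' k, (∑ n ∈ s, ee n k * x n)^2 :=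
          Summable.sum_le_tsum K (fun k _ => sq_nonneg _) h1.1
        have h3 : ∑ n ∈ s, (x n)^2 ≤ (∑' n, (x (n+N))^2) := by
          rw [hs, Finset.sum_map]
          simp only [Function.Embedding.coeFn_mk]
          exact Summable.sum_le_tsum (Finset.range M) (fun n _ => sq_nonneg _) (hxshift N)
        have h4 : ∑' k, (∑ n ∈ s, ee n k * x n)^2 ≤ π^2 * (∑' n, (x (n+N))^2) := by
          rw [h1.2]
          nlinarith [sq_nonneg (∑ n ∈ s, x n / al n), sq_nonneg π]
        calc ∑ k ∈ K, (∑ n ∈ Finset.range M, ee (n+N) k * x (n+N))^2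
            = ∑ k ∈ K, (∑ n ∈ s, ee n k * x n)^2 :=
              Finset.sum_congr rfl fun k _ => by rw [hmap k]
          _ ≤ π^2 * (∑' n, (x (n+N))^2) := le_trans h2 h4
      have hconv : ∀ k : ℕ, Tendsto (fun M => ∑ n ∈ Finset.range M, ee (n+N) k * x (n+N))
          atTop (𝓝 ((∑' n, ee (n+N) k * x (n+N)))) := by
        intro k
        have hsummable : Summable fun n => ee (n+N) k * x (n+N) :=
          (summable_nat_add_iff (f := fun n => ee n k * x n) N).2 (hrow k)
        exact hsummable.hasSum.tendsto_sum_nat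
      have hconv2 : Tendsto (fun M => ∑ k ∈ K, (∑ n ∈ Finset.range M, ee (n+N) k * x (n+N))^2)
          atTop (𝓝 (∑ k ∈ K, ((∑' n, ee (n+N) k * x (n+N)))^2)) := by
        apply tendsto_finset_sum
        intro k _
        exact (hconv k).pow 2
      exact le_of_tendsto hconv2 (Eventually.of_forall hptM)
    refine ⟨summable_of_sum_le (fun k => sq_nonneg _) hpartial, ?_⟩
    exact Summable.tsum_le_of_sum_le (summable_of_sum_le (fun k => sq_nonneg _) hpartial) hpartial
  have hys : Summable fun k => ((∑' n, ee n k * x n))^2 := by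
    have := summable_sq_add (hYs 0) (hRbound 0).1
    exact this.congr fun k => by rw [← hdecomp 0 k]
  have hT0 : ∀ N, 0 ≤ (∑' n, (x (n+N))^2) := fun N => tsum_nonneg fun n => sq_nonneg _
  have hsqrtR : ∀ N, Real.sqrt (∑' k, ((∑' n, ee (n+N) k * x (n+N)))^2) ≤ π * Real.sqrt ((∑' n, (x (n+N))^2)) := by
    intro N
    calc Real.sqrt (∑' k, ((∑' n, ee (n+N) k * x (n+N)))^2) ≤ Real.sqrt (π^2 * (∑' n, (x (n+N))^2)) :=
        Real.sqrt_le_sqrt (hRbound N).2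
      _ = π * Real.sqrt ((∑' n, (x (n+N))^2)) := by
        rw [Real.sqrt_mul (sq_nonneg π), Real.sqrt_sq Real.pi_pos.le]
  have hup : ∀ N, Real.sqrt (∑' k, ((∑' n, ee n k * x n))^2)
      ≤ Real.sqrt (∑' k, ((∑ n ∈ Finset.range N, ee n k * x n))^2) + π * Real.sqrt ((∑' n, (x (n+N))^2)) := by
    intro N
    have h1 : ∑' k, ((∑' n, ee n k * x n))^2 = ∑' k, ((∑ n ∈ Finset.range N, ee n k * x n) + (∑' n, ee (n+N) k * x (n+N)))^2 :=
      tsum_congr fun k => by rw [hdecomp N k]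
    rw [h1]
    calc Real.sqrt (∑' k, ((∑ n ∈ Finset.range N, ee n k * x n) + (∑' n, ee (n+N) k * x (n+N)))^2)
        ≤ Real.sqrt (∑' k, ((∑ n ∈ Finset.range N, ee n k * x n))^2) + Real.sqrt (∑' k, ((∑' n, ee (n+N) k * x (n+N)))^2) :=
          minkowski (hYs N) (hRbound N).1
      _ ≤ _ := by linarith [hsqrtR N]
  have hdown : ∀ N, Real.sqrt (∑' k, ((∑ n ∈ Finset.range N, ee n k * x n))^2)
      ≤ Real.sqrt (∑' k, ((∑' n, ee n k * x n))^2) + π * Real.sqrt ((∑' n, (x (n+N))^2)) := by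
    intro N
    have h1 : ∀ k, (∑ n ∈ Finset.range N, ee n k * x n) = (∑' n, ee n k * x n) + (-((∑' n, ee (n+N) k * x (n+N)))) := fun k => by rw [hdecomp N k]; ring
    have hRneg : Summable fun k => (-((∑' n, ee (n+N) k * x (n+N))))^2 :=
      (hRbound N).1.congr fun k => by rw [neg_sq]
    have h2 : ∑' k, ((∑ n ∈ Finset.range N, ee n k * x n))^2 = ∑' k, ((∑' n, ee n k * x n) + (-((∑' n, ee (n+N) k * x (n+N)))))^2 :=
      tsum_congr fun k => by rw [h1 k]
    rw [h2]
    have h3 : ∑' k, (-((∑' n, ee (n+N) k * x (n+N))))^2 = ∑' k, ((∑' n, ee (n+N) k * x (n+N)))^2 := tsum_congr fun k => by rw [neg_sq]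
    calc Real.sqrt (∑' k, ((∑' n, ee n k * x n) + -((∑' n, ee (n+N) k * x (n+N))))^2)
        ≤ Real.sqrt (∑' k, ((∑' n, ee n k * x n))^2) + Real.sqrt (∑' k, (-((∑' n, ee (n+N) k * x (n+N))))^2) := minkowski hys hRneg
      _ ≤ _ := by rw [h3]; linarith [hsqrtR N]
  have hTlim : Tendsto (fun N => ∑' n, (x (n+N))^2) atTop (𝓝 0) := tendsto_sum_nat_add (fun n => (x n)^2)
  have hTs : Tendsto (fun N => π * Real.sqrt ((∑' n, (x (n+N))^2))) atTop (𝓝 0) := by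
    have h := (Real.continuous_sqrt.tendsto 0).comp hTlim
    simp only [Function.comp_def, Real.sqrt_zero] at h
    simpa using h.const_mul π
  have hYlim : Tendsto (fun N => Real.sqrt (∑' k, ((∑ n ∈ Finset.range N, ee n k * x n))^2)) atTop
      (𝓝 (π * Real.sqrt (∑' n, (x n)^2))) := by
    have hs : Tendsto (fun N => ∑ n ∈ Finset.range N, (x n)^2) atTop (𝓝 (∑' n, (x n)^2)) :=
      hx.hasSum.tendsto_sum_nat
    have hvsum : Summable (fun n => x n / al n) := by
      have h2 : Summable (fun n : ℕ => (1/al n)^2) := by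
        have := summable_inv_sq (3/2) (fun n => by positivity)
        exact this.congr fun n => by simp only [al]
      have := summable_mul_of_sq hx h2
      exact this.congr fun n => by rw [mul_one_div]
    have hu0 : ∑' n, x n / al n = 0 := by
      rw [← hx0]
      exact tsum_congr fun n => by simp only [al]; ring_nf
    have hu : Tendsto (fun N => ∑ n ∈ Finset.range N, x n / al n) atTop (𝓝 0) := by
      have := hvsum.hasSum.tendsto_sum_nat
      rwa [hu0] at this
    have hcomb : Tendsto (fun N => π^2 * (∑ n ∈ Finset.range N, (x n)^2)
        - 2*(∑ n ∈ Finset.range N, x n / al n)^2) atTop (𝓝 (π^2 * (∑' n, (x n)^2))) := by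
      have h1 := hs.const_mul (π^2)
      have h2 := (hu.pow 2).const_mul 2
      have h3 := h1.sub h2
      simpa using h3
    have hsqrtlim : Tendsto (fun N => Real.sqrt (π^2 * (∑ n ∈ Finset.range N, (x n)^2)
        - 2*(∑ n ∈ Finset.range N, x n / al n)^2)) atTop
        (𝓝 (Real.sqrt (π^2 * (∑' n, (x n)^2)))) :=
      (Real.continuous_sqrt.tendsto _).comp hcomb
    have heq : ∀ N, Real.sqrt (∑' k, ((∑ n ∈ Finset.range N, ee n k * x n))^2)
        = Real.sqrt (π^2 * (∑ n ∈ Finset.range N, (x n)^2)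
          - 2*(∑ n ∈ Finset.range N, x n / al n)^2) := fun N => by rw [hYv N]
    rw [show π * Real.sqrt (∑' n, (x n)^2) = Real.sqrt (π^2 * (∑' n, (x n)^2)) by
      rw [Real.sqrt_mul (sq_nonneg π), Real.sqrt_sq Real.pi_pos.le]]
    simp only [← heq] at hsqrtlim
    exact hsqrtlim
  have hYlim2 : Tendsto (fun N => Real.sqrt (∑' k, ((∑ n ∈ Finset.range N, ee n k * x n))^2)) atTop
      (𝓝 (Real.sqrt (∑' k, ((∑' n, ee n k * x n))^2))) := by
    have hdiff : Tendsto (fun N => Real.sqrt (∑' k, ((∑ n ∈ Finset.range N, ee n k * x n))^2) - Real.sqrt (∑' k, ((∑' n, ee n k * x n))^2))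
        atTop (𝓝 0) := by
      refine squeeze_zero_norm (fun N => ?_) hTs
      rw [Real.norm_eq_abs, abs_sub_le_iff]
      exact ⟨by linarith [hdown N], by linarith [hup N]⟩
    have := hdiff.add_const (Real.sqrt (∑' k, ((∑' n, ee n k * x n))^2))
    simpa using this
  exact tendsto_nhds_unique hYlim2 hYlim
end
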